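/- arXiv:2007.13643 — 2 statements merged into one kernel-verified Lean document; each statement's English description precedes it below -/
import Mathlib

section
/- Let k > 0 and let α, β, β', γ, γ' be complex numbers with Re(γ) > Re(β) > 0 and Re(γ') > Re(β') > 0, and let x, y be complex numbers with |x| + |y| < 1/k. Then the second Appell k-function has the double integral representation F_{2,k}(α,β,β';γ,γ';x,y) = [1/(k² B_k(β,γ−β) B_k(β',γ'−β'))] · ∫₀¹∫₀¹ t^{β/k−1} s^{β'/k−1} (1−t)^{(γ−β)/k−1} (1−s)^{(γ'−β')/k−1} (1−kxt−kys)^{−α/k} dt ds. -/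
open MeasureTheory Complex

/-- Pochhammer k-symbol: (x)_{n,k} = x(x+k)...(x+(n-1)k). -/
noncomputable def kPoch (k : ℝ) (x : ℂ) (n : ℕ) : ℂ :=
  ∏ i ∈ Finset.range n, (x + (i : ℂ) * (k : ℂ))

/-- k-hypergeometric function ₂F₁ₖ[a, b; c; x]. -/
noncomputable def hyp2F1k (k : ℝ) (a b c x : ℂ) : ℂ :=
  ∑' n : ℕ, kPoch k a n * kPoch k b n / kPoch k c n * x ^ n / (n.factorial : ℂ)

/-- First Appell k-function F_{1,k}(a, b, b'; c; x, y). -/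
noncomputable def F1k (k : ℝ) (a b b' c x y : ℂ) : ℂ :=
  ∑' p : ℕ × ℕ,
    kPoch k a (p.1 + p.2) * kPoch k b p.1 * kPoch k b' p.2 / kPoch k c (p.1 + p.2)
      * x ^ p.1 * y ^ p.2 / ((p.1.factorial : ℂ) * (p.2.factorial : ℂ))

/-- Second Appell k-function F_{2,k}(a, b, b'; c, c'; x, y). -/
noncomputable def F2k (k : ℝ) (a b b' c c' x y : ℂ) : ℂ :=
  ∑' p : ℕ × ℕ,
    kPoch k a (p.1 + p.2) * kPoch k b p.1 * kPoch k b' p.2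
      / (kPoch k c p.1 * kPoch k c' p.2)
      * x ^ p.1 * y ^ p.2 / ((p.1.factorial : ℂ) * (p.2.factorial : ℂ))

/-- Third Appell k-function F_{3,k}(a, a', b, b'; c; x, y). -/
noncomputable def F3k (k : ℝ) (a a' b b' c x y : ℂ) : ℂ :=
  ∑' p : ℕ × ℕ,
    kPoch k a p.1 * kPoch k a' p.2 * kPoch k b p.1 * kPoch k b' p.2
      / kPoch k c (p.1 + p.2)
      * x ^ p.1 * y ^ p.2 / ((p.1.factorial : ℂ) * (p.2.factorial : ℂ))

/-- k-Gamma function Γ_k(x) = ∫₀^∞ t^{x-1} e^{-t^k/k} dt. -/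
noncomputable def kGammaF (k : ℝ) (x : ℂ) : ℂ :=
  ∫ t in Set.Ioi (0 : ℝ), (t : ℂ) ^ (x - 1) * Complex.exp (-((t ^ k : ℝ) : ℂ) / (k : ℂ))

/-- k-Beta function B_k(x, y) = (1/k) ∫₀¹ t^{x/k-1} (1-t)^{y/k-1} dt. -/
noncomputable def kBetaF (k : ℝ) (x y : ℂ) : ℂ :=
  (1 / (k : ℂ)) * ∫ t in (0:ℝ)..1, (t : ℂ) ^ (x / (k : ℂ) - 1) * ((1 : ℂ) - (t : ℂ)) ^ (y / (k : ℂ) - 1)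

section AuxF2k
open Finset

noncomputable def poch (c : ℂ) (n : ℕ) : ℂ := ∏ i ∈ Finset.range n, (c + i)

lemma poch_zero (c : ℂ) : poch c 0 = 1 := by simp [poch]

lemma poch_succ (c : ℂ) (n : ℕ) : poch c (n + 1) = poch c n * (c + n) := by
  simp [poch, Finset.prod_range_succ]

lemma poch_ne_zero {c : ℂ} (hc : 0 < c.re) (n : ℕ) : poch c n ≠ 0 := by
  refine Finset.prod_ne_zero_iff.2 fun i _ => ?_
  intro h
  have : (c + i).re = 0 := by rw [h]; simp
  simp only [Complex.add_re, Complex.natCast_re] at this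
  have : (0:ℝ) ≤ (i:ℝ) := Nat.cast_nonneg i
  linarith [Complex.add_re c i, Complex.natCast_re i]

/-- Iterated derivative of `z ↦ (1-z)^(-c)` on the unit ball. -/
lemma iteratedDeriv_one_sub_cpow (c : ℂ) (n : ℕ) :
    ∀ z ∈ Metric.ball (0:ℂ) 1,
      iteratedDeriv n (fun w : ℂ => (1 - w) ^ (-c)) z = poch c n * (1 - z) ^ (-c - n) := by
  induction n with
  | zero => intro z _; simp [poch_zero]
  | succ n ih =>
    intro z hz
    have hre : ∀ w : ℂ, w ∈ Metric.ball (0:ℂ) 1 → 0 < (1 - w).re := by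
      intro w hw
      rw [Metric.mem_ball, dist_zero_right] at hw
      have := Complex.re_le_norm w
      simp only [Complex.sub_re, Complex.one_re]
      linarith
    rw [iteratedDeriv_succ]
    have heq : iteratedDeriv n (fun w : ℂ => (1 - w) ^ (-c))
        =ᶠ[nhds z] fun w => poch c n * (1 - w) ^ (-c - n) := by
      filter_upwards [Metric.isOpen_ball.mem_nhds hz] with w hw using ih w hw
    rw [heq.deriv_eq]
    have hbase : HasDerivAt (fun w : ℂ => 1 - w) (-1) z := (hasDerivAt_id z).const_sub 1
    have hslit : (1 - z) ∈ Complex.slitPlane := Or.inl (hre z hz)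
    have hd : HasDerivAt (fun w : ℂ => (1 - w) ^ (-c - n))
        ((-c - n) * (1 - z) ^ (-c - n - 1) * (-1)) z := hbase.cpow_const hslit
    rw [(hd.const_mul (poch c n)).deriv]
    rw [poch_succ]
    have : (-c - (n:ℂ) - 1) = -c - ((n:ℕ)+1 : ℕ) := by push_cast; ring
    rw [this]
    push_cast
    ring

/-- Binomial series: `(1-w)^(-c) = ∑ poch c n * w^n / n!` for `‖w‖ < 1`. -/
lemma hasSum_one_sub_cpow {w : ℂ} (hw : ‖w‖ < 1) (c : ℂ) :
    HasSum (fun n : ℕ => poch c n * w ^ n / (n.factorial : ℂ)) ((1 - w) ^ (-c)) := by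
  have hd : DifferentiableOn ℂ (fun w : ℂ => (1 - w) ^ (-c)) (Metric.ball 0 1) := by
    intro z hz
    rw [Metric.mem_ball, dist_zero_right] at hz
    have hre : 0 < (1 - z).re := by
      have := Complex.re_le_norm z
      simp only [Complex.sub_re, Complex.one_re]; linarith
    exact (((differentiableAt_const (1:ℂ)).sub differentiableAt_id).cpow
      (differentiableAt_const _) (Or.inl hre)).differentiableWithinAt
  have hwball : w ∈ Metric.ball (0:ℂ) 1 := by
    rw [Metric.mem_ball, dist_zero_right]; exact hw
  have H := Complex.hasSum_taylorSeries_on_ball hd hwball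
  have h0 : (0:ℂ) ∈ Metric.ball (0:ℂ) 1 := by simp
  have hit : ∀ n, iteratedDeriv n (fun w : ℂ => (1 - w) ^ (-c)) 0 = poch c n := by
    intro n
    rw [iteratedDeriv_one_sub_cpow c n 0 h0]
    simp
  have hfe : (fun n : ℕ => poch c n * w ^ n / (n.factorial : ℂ))
      = fun n => ((n.factorial : ℂ))⁻¹ • (w - 0) ^ n •
          iteratedDeriv n (fun w : ℂ => (1 - w) ^ (-c)) 0 := by
    funext n
    rw [hit n]
    simp only [smul_eq_mul, sub_zero]
    ring
  rw [hfe]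
  exact H

/-- multinomial sum -/
lemma sum_antidiagonal_pow {K : Type*} [Field K] [CharZero K] (u v : K) (n : ℕ) :
    ∑ ij ∈ Finset.HasAntidiagonal.antidiagonal n, u ^ ij.1 * v ^ ij.2 / ((ij.1.factorial : K) * (ij.2.factorial : K))
      = (u + v) ^ n / (n.factorial : K) := by
  rw [Finset.Nat.sum_antidiagonal_eq_sum_range_succ_mk]
  rw [add_pow]
  rw [Finset.sum_div]
  refine Finset.sum_congr rfl fun k hk => ?_
  rw [Finset.mem_range] at hk
  have hkn : k ≤ n := Nat.lt_succ_iff.mp hk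
  have hch : (n.choose k : K) * ((k.factorial : K) * ((n - k).factorial : K)) = (n.factorial : K) := by
    rw [← Nat.cast_mul, ← Nat.cast_mul, ← mul_assoc, Nat.choose_mul_factorial_mul_factorial hkn]
  have h1 : (k.factorial : K) ≠ 0 := Nat.cast_ne_zero.2 k.factorial_ne_zero
  have h2 : ((n-k).factorial : K) ≠ 0 := Nat.cast_ne_zero.2 (n-k).factorial_ne_zero
  have h3 : (n.factorial : K) ≠ 0 := Nat.cast_ne_zero.2 n.factorial_ne_zero
  field_simp
  rw [← hch]
  ring

/-- ratio-test summability -/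
lemma summable_poch_geom (c : ℂ) {w : ℝ} (h0 : 0 ≤ w) (h1 : w < 1) :
    Summable (fun n : ℕ => ‖poch c n‖ * w ^ n / (n.factorial : ℝ)) := by
  set r : ℝ := (w + 1) / 2 with hr
  have hwr : w < r := by rw [hr]; linarith
  have hr1 : r < 1 := by rw [hr]; linarith
  have hr0 : 0 < r := by rw [hr]; linarith
  apply summable_of_ratio_norm_eventually_le hr1
  have hN : ∀ᶠ n : ℕ in Filter.atTop, ‖c‖ * w ≤ (r - w) * n + r := by
    have : Filter.Tendsto (fun n : ℕ => (r - w) * n + r) Filter.atTop Filter.atTop := by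
      apply Filter.Tendsto.atTop_add ?_ tendsto_const_nhds
      exact Filter.Tendsto.const_mul_atTop (by linarith) tendsto_natCast_atTop_atTop
    exact this.eventually_ge_atTop _
  filter_upwards [hN] with n hn
  have key : ‖c + n‖ * w ≤ r * (n + 1) := by
    have : ‖c + (n:ℂ)‖ ≤ ‖c‖ + n := by
      calc ‖c + (n:ℂ)‖ ≤ ‖c‖ + ‖(n:ℂ)‖ := norm_add_le _ _
      _ = ‖c‖ + n := by rw [Complex.norm_natCast]
    nlinarith [norm_nonneg (c + (n:ℂ))]
  have hfact : (0:ℝ) < n.factorial := by positivity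
  rw [Real.norm_of_nonneg (by positivity), Real.norm_of_nonneg (by positivity)]
  rw [poch_succ, norm_mul]
  have expand : ‖poch c n‖ * ‖c + n‖ * w ^ (n+1) / ((n+1).factorial : ℝ)
      = (‖poch c n‖ * w ^ n / (n.factorial : ℝ)) * (‖c + n‖ * w / (n + 1)) := by
    rw [Nat.factorial_succ]
    push_cast
    field_simp
    ring
  rw [expand]
  rcases le_or_gt (‖poch c n‖ * w ^ n / (n.factorial : ℝ)) 0 with hle | hpos
  · have h0' : ‖poch c n‖ * w ^ n / (n.factorial : ℝ) = 0 := le_antisymm hle (by positivity)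
    rw [h0']; simp
  · rw [mul_comm r _]
    have hr' : ‖c + ↑n‖ * w / (↑n + 1) ≤ r :=
      (div_le_iff₀ (by positivity)).mpr (by linarith [key])
    exact mul_le_mul_of_nonneg_left hr' (le_of_lt hpos)

/-- summability of the norms of the 2-variable binomial family -/
lemma summable_poch_two (c : ℂ) {u v : ℝ} (hu : 0 ≤ u) (hv : 0 ≤ v) (huv : u + v < 1) :
    Summable (fun p : ℕ × ℕ =>
      ‖poch c (p.1 + p.2)‖ * u ^ p.1 * v ^ p.2 / ((p.1.factorial : ℝ) * (p.2.factorial : ℝ))) := by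
  rw [← Finset.HasAntidiagonal.sigmaAntidiagonalEquivProd.summable_iff]
  refine (summable_sigma_of_nonneg ?_).mpr ⟨fun n => Summable.of_finite, ?_⟩
  · intro x
    exact div_nonneg (by positivity) (by positivity)
  · have hfib : ∀ n : ℕ, (∑' x : (Finset.HasAntidiagonal.antidiagonal n : Finset (ℕ × ℕ)),
        ‖poch c ((x : ℕ × ℕ).1 + (x : ℕ × ℕ).2)‖ * u ^ (x : ℕ × ℕ).1 * v ^ (x : ℕ × ℕ).2
          / (((x : ℕ × ℕ).1.factorial : ℝ) * ((x : ℕ × ℕ).2.factorial : ℝ)))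
        = ‖poch c n‖ * (u + v) ^ n / (n.factorial : ℝ) := by
      intro n
      rw [tsum_fintype]
      rw [Finset.sum_coe_sort (Finset.HasAntidiagonal.antidiagonal n)
        (fun p => ‖poch c (p.1 + p.2)‖ * u ^ p.1 * v ^ p.2
          / ((p.1.factorial : ℝ) * (p.2.factorial : ℝ)))]
      have : ∀ p ∈ Finset.HasAntidiagonal.antidiagonal n,
          ‖poch c (p.1 + p.2)‖ * u ^ p.1 * v ^ p.2 / ((p.1.factorial : ℝ) * (p.2.factorial : ℝ))
          = ‖poch c n‖ * (u ^ p.1 * v ^ p.2 / ((p.1.factorial : ℝ) * (p.2.factorial : ℝ))) := by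
        intro p hp
        rw [Finset.HasAntidiagonal.mem_antidiagonal] at hp
        rw [hp]
        ring
      rw [Finset.sum_congr rfl this, ← Finset.mul_sum, sum_antidiagonal_pow]
      ring
    have hsum := (summable_poch_geom c (add_nonneg hu hv) huv)
    apply Summable.congr ?_ (fun n => (hfib n).symm)
    apply hsum.congr
    intro n
    ring

/-- 2-variable binomial series. -/
lemma hasSum_two_var {u v : ℂ} (huv : ‖u‖ + ‖v‖ < 1) (c : ℂ) :
    HasSum (fun p : ℕ × ℕ =>
        poch c (p.1 + p.2) * u ^ p.1 * v ^ p.2 / ((p.1.factorial : ℂ) * (p.2.factorial : ℂ)))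
      ((1 - u - v) ^ (-c)) := by
  set f : ℕ × ℕ → ℂ := fun p =>
    poch c (p.1 + p.2) * u ^ p.1 * v ^ p.2 / ((p.1.factorial : ℂ) * (p.2.factorial : ℂ)) with hf
  have hnorm : ∀ p : ℕ × ℕ, ‖f p‖ =
      ‖poch c (p.1 + p.2)‖ * ‖u‖ ^ p.1 * ‖v‖ ^ p.2 / ((p.1.factorial : ℝ) * (p.2.factorial : ℝ)) := by
    intro p
    simp [hf, norm_mul, norm_div, norm_pow, Complex.norm_natCast]
  have hsummable : Summable f := by
    apply Summable.of_norm
    apply Summable.congr (summable_poch_two c (norm_nonneg u) (norm_nonneg v) huv)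
    exact fun p => (hnorm p).symm
  obtain ⟨S, hS⟩ := hsummable
  have hSsig : HasSum (f ∘ Finset.HasAntidiagonal.sigmaAntidiagonalEquivProd) S :=
    Finset.HasAntidiagonal.sigmaAntidiagonalEquivProd.hasSum_iff.mpr hS
  have hfib : ∀ n : ℕ, HasSum (fun x : (Finset.HasAntidiagonal.antidiagonal n : Finset (ℕ × ℕ)) =>
      (f ∘ Finset.HasAntidiagonal.sigmaAntidiagonalEquivProd) ⟨n, x⟩)
      (poch c n * (u + v) ^ n / (n.factorial : ℂ)) := by
    intro n
    have h1 := hasSum_fintype (fun x : (Finset.HasAntidiagonal.antidiagonal n : Finset (ℕ × ℕ)) => f (x : ℕ × ℕ))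
    have h2 : ∑ x : (Finset.HasAntidiagonal.antidiagonal n : Finset (ℕ × ℕ)), f (x : ℕ × ℕ)
        = poch c n * (u + v) ^ n / (n.factorial : ℂ) := by
      rw [Finset.sum_coe_sort (Finset.HasAntidiagonal.antidiagonal n) f]
      have : ∀ p ∈ Finset.HasAntidiagonal.antidiagonal n, f p
          = poch c n * (u ^ p.1 * v ^ p.2 / ((p.1.factorial : ℂ) * (p.2.factorial : ℂ))) := by
        intro p hp
        rw [Finset.HasAntidiagonal.mem_antidiagonal] at hp
        rw [hf]
        simp only
        rw [hp]
        ring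
      rw [Finset.sum_congr rfl this, ← Finset.mul_sum, sum_antidiagonal_pow]
      ring
    rw [← h2]
    exact h1
  have hdiag : HasSum (fun n : ℕ => poch c n * (u + v) ^ n / (n.factorial : ℂ)) S :=
    hSsig.sigma hfib
  have hone := hasSum_one_sub_cpow (w := u + v) (by
    calc ‖u + v‖ ≤ ‖u‖ + ‖v‖ := norm_add_le u v
    _ < 1 := huv) c
  have : S = (1 - (u + v)) ^ (-c) := hdiag.unique hone
  rw [this] at hS
  rw [← sub_sub] at hS
  exact hS

lemma Gamma_add_nat {a : ℂ} (ha : 0 < a.re) (n : ℕ) :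
    Complex.Gamma (a + n) = poch a n * Complex.Gamma a := by
  induction n with
  | zero => simp [poch]
  | succ n ih =>
    have h1 : a + ((n:ℂ) + 1) = (a + n) + 1 := by ring
    have hre : 0 < (a + (n:ℂ)).re := by
      simp only [Complex.add_re, Complex.natCast_re]
      positivity
    have hne : (a + (n:ℂ)) ≠ 0 := fun h => by simp [h] at hre
    rw [show ((n+1 : ℕ) : ℂ) = (n:ℂ) + 1 by push_cast; ring, h1,
      Complex.Gamma_add_one _ hne, ih, poch_succ]
    ring

lemma betaIntegral_ne_zero {a d : ℂ} (ha : 0 < a.re) (hd : 0 < d.re) :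
    Complex.betaIntegral a d ≠ 0 := by
  have h := Complex.Gamma_mul_Gamma_eq_betaIntegral ha hd
  have hGa := Complex.Gamma_ne_zero_of_re_pos ha
  have hGd := Complex.Gamma_ne_zero_of_re_pos hd
  have hGad : Complex.Gamma (a + d) ≠ 0 :=
    Complex.Gamma_ne_zero_of_re_pos (by simp only [Complex.add_re]; positivity)
  intro hz
  rw [hz, mul_zero] at h
  exact (mul_ne_zero hGa hGd) h

lemma betaIntegral_shift {a d : ℂ} (ha : 0 < a.re) (hd : 0 < d.re) (m : ℕ) :
    Complex.betaIntegral (a + m) d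
      = poch a m / poch (a + d) m * Complex.betaIntegral a d := by
  have ham : 0 < (a + (m:ℂ)).re := by
    simp only [Complex.add_re, Complex.natCast_re]; positivity
  have h1 := Complex.Gamma_mul_Gamma_eq_betaIntegral ham hd
  have h2 := Complex.Gamma_mul_Gamma_eq_betaIntegral ha hd
  have had : 0 < (a + d).re := by simp only [Complex.add_re]; positivity
  have e1 : a + (m:ℂ) + d = (a + d) + m := by ring
  rw [e1, Gamma_add_nat had m, Gamma_add_nat ha m] at h1
  have hGad : Complex.Gamma (a + d) ≠ 0 := Complex.Gamma_ne_zero_of_re_pos had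
  have hpad : poch (a + d) m ≠ 0 := poch_ne_zero had m
  have hGa := Complex.Gamma_ne_zero_of_re_pos ha
  have hGd := Complex.Gamma_ne_zero_of_re_pos hd
  field_simp at h1 h2 ⊢
  -- h1 : poch a m * Gamma a * Gamma d = poch (a+d) m * Gamma (a+d) * betaIntegral (a+m) d
  -- h2 : Gamma a * Gamma d = Gamma (a+d) * betaIntegral a d
  -- goal : betaIntegral (a+m) d * poch (a+d) m = poch a m * betaIntegral a d
  apply mul_left_cancel₀ hGad
  linear_combination poch a m * h2 - h1

lemma norm_cpow_real_eq (t : ℝ) (ht : 0 < t) (y : ℂ) :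
    ‖(t:ℂ) ^ y‖ = t ^ y.re := by
  rw [Complex.norm_cpow_eq_rpow_re_of_pos ht]

lemma norm_one_sub_cpow_le {d : ℂ} (hd : 0 < d.re) {t : ℝ} (ht0 : 0 ≤ t) (ht1 : t ≤ 1) :
    ‖(1 - (t:ℂ)) ^ (d - 1)‖ ≤ (1 - t) ^ (d.re - 1) := by
  have hcast : (1 : ℂ) - (t:ℂ) = ((1 - t : ℝ) : ℂ) := by push_cast; ring
  rcases lt_or_eq_of_le ht1 with h | h
  · rw [hcast, norm_cpow_real_eq (1 - t) (by linarith)]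
    simp
  · subst h
    by_cases hd1 : d = 1
    · simp [hd1]
    · have hne : d - 1 ≠ 0 := sub_ne_zero.2 hd1
      simp only [sub_self, Complex.ofReal_one, Complex.zero_cpow hne, norm_zero]
      positivity

lemma integrableOn_real_beta {p q : ℝ} (hp : 0 < p) (hq : 0 < q) :
    IntegrableOn (fun t : ℝ => t ^ (p - 1) * (1 - t) ^ (q - 1)) (Set.Ioc 0 1) volume := by
  have hC : IntervalIntegrable
      (fun x : ℝ => (x:ℂ) ^ ((p:ℂ) - 1) * (1 - (x:ℂ)) ^ ((q:ℂ) - 1)) volume 0 1 :=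
    Complex.betaIntegral_convergent (by simpa using hp) (by simpa using hq)
  have hC2 := ((intervalIntegrable_iff_integrableOn_Ioc_of_le zero_le_one).mp hC).norm
  refine IntegrableOn.congr_fun hC2 ?_ measurableSet_Ioc
  intro t ht
  obtain ⟨ht0, ht1⟩ := ht
  simp only [norm_mul]
  rw [norm_cpow_real_eq t ht0]
  have h1 : (((p:ℂ)) - 1).re = p - 1 := by simp
  rw [h1]
  congr 1
  have hcast : (1 : ℂ) - (t:ℂ) = ((1 - t : ℝ) : ℂ) := by push_cast; ring
  rcases lt_or_eq_of_le ht1 with h | h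
  · rw [hcast, norm_cpow_real_eq (1 - t) (by linarith)]
    simp
  · subst h
    by_cases hq1 : q = 1
    · simp [hq1]
    · have hne : ((q:ℂ)) - 1 ≠ 0 := by
        simp only [ne_eq, sub_eq_zero]
        exact_mod_cast hq1
      simp only [sub_self, Complex.ofReal_one, Complex.zero_cpow hne, norm_zero]
      rw [Real.zero_rpow (by simpa using sub_ne_zero.2 hq1)]

lemma norm_term_le {a d : ℂ} (ha : 0 < a.re) (hd : 0 < d.re) (m : ℕ) :
    ∀ t ∈ Set.Ioc (0:ℝ) 1,
      ‖(t:ℂ) ^ (a - 1 + m) * (1 - (t:ℂ)) ^ (d - 1)‖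
        ≤ t ^ (a.re - 1) * (1 - t) ^ (d.re - 1) := by
  intro t ht
  obtain ⟨ht0, ht1⟩ := ht
  rw [norm_mul, norm_cpow_real_eq t ht0]
  have h1 : (a - 1 + (m:ℂ)).re = a.re - 1 + m := by simp
  rw [h1]
  have hb1 : t ^ (a.re - 1 + m) ≤ t ^ (a.re - 1) :=
    Real.rpow_le_rpow_of_exponent_ge ht0 ht1 (le_add_of_nonneg_right (Nat.cast_nonneg m))
  exact mul_le_mul hb1 (norm_one_sub_cpow_le hd (le_of_lt ht0) ht1) (norm_nonneg _)
    (Real.rpow_nonneg (le_of_lt ht0) _)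

lemma integrableOn_cpow_term {a d : ℂ} (ha : 0 < a.re) (hd : 0 < d.re) (m : ℕ) :
    IntegrableOn (fun t : ℝ => (t:ℂ) ^ (a - 1 + m) * (1 - (t:ℂ)) ^ (d - 1))
      (Set.Ioc 0 1) volume := by
  have hre : 0 < (a + (m:ℂ)).re := by
    simp only [Complex.add_re, Complex.natCast_re]; positivity
  have hC := (intervalIntegrable_iff_integrableOn_Ioc_of_le zero_le_one).mp
    (Complex.betaIntegral_convergent hre hd)
  refine hC.congr_fun (fun t _ => ?_) measurableSet_Ioc
  congr 2
  ring

lemma integral_norm_le_realBeta {a d : ℂ} (ha : 0 < a.re) (hd : 0 < d.re) (m : ℕ) :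
    (∫ t in Set.Ioc (0:ℝ) 1, ‖(t:ℂ) ^ (a - 1 + m) * (1 - (t:ℂ)) ^ (d - 1)‖)
      ≤ ∫ t in Set.Ioc (0:ℝ) 1, t ^ (a.re - 1) * (1 - t) ^ (d.re - 1) := by
  refine setIntegral_mono_on ((integrableOn_cpow_term ha hd m).norm) (integrableOn_real_beta ha hd)
    measurableSet_Ioc (norm_term_le ha hd m)

lemma norm_betaIntegral_le {a d : ℂ} (ha : 0 < a.re) (hd : 0 < d.re) (m : ℕ) :
    ‖Complex.betaIntegral (a + m) d‖
      ≤ ∫ t in Set.Ioc (0:ℝ) 1, t ^ (a.re - 1) * (1 - t) ^ (d.re - 1) := by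
  rw [Complex.betaIntegral, intervalIntegral.integral_of_le zero_le_one]
  have h1 : ∀ t : ℝ, (t:ℂ) ^ (a + m - 1) * (1 - (t:ℂ)) ^ (d - 1)
      = (t:ℂ) ^ (a - 1 + m) * (1 - (t:ℂ)) ^ (d - 1) := by
    intro t; congr 2; ring
  simp_rw [h1]
  exact (norm_integral_le_integral_norm _).trans (integral_norm_le_realBeta ha hd m)

/-- Key interchange lemma. -/
lemma integral_tsum_beta {a d : ℂ} (ha : 0 < a.re) (hd : 0 < d.re)
    {ι : Type} [Countable ι] (g : ι → ℂ) (e : ι → ℕ)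
    (hg : Summable (fun i => ‖g i‖)) :
    (∫ t in (0:ℝ)..1, ((t:ℂ) ^ (a - 1) * (1 - (t:ℂ)) ^ (d - 1) * ∑' i, g i * (t:ℂ) ^ (e i)))
      = ∑' i, g i * Complex.betaIntegral (a + e i) d := by
  rw [intervalIntegral.integral_of_le zero_le_one]
  set F : ι → ℝ → ℂ := fun i t => g i * ((t:ℂ) ^ (a - 1 + e i) * (1 - (t:ℂ)) ^ (d - 1)) with hF
  have hint : ∀ i, Integrable (F i) (volume.restrict (Set.Ioc (0:ℝ) 1)) := fun i =>
    (integrableOn_cpow_term ha hd (e i)).const_mul (g i)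
  have hcongr : ∀ t ∈ Set.Ioc (0:ℝ) 1,
      (t:ℂ) ^ (a - 1) * (1 - (t:ℂ)) ^ (d - 1) * ∑' i, g i * (t:ℂ) ^ (e i)
        = ∑' i, F i t := by
    intro t ht
    have ht0 : (t:ℂ) ≠ 0 := by
      simp only [ne_eq, Complex.ofReal_eq_zero]
      exact ne_of_gt ht.1
    have hsplit : ∀ i, F i t
        = ((t:ℂ) ^ (a - 1) * (1 - (t:ℂ)) ^ (d - 1)) * (g i * (t:ℂ) ^ (e i)) := by
      intro i
      rw [hF]
      simp only
      rw [Complex.cpow_add _ _ ht0, Complex.cpow_natCast]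
      ring
    rw [tsum_congr hsplit, tsum_mul_left]
  rw [setIntegral_congr_fun measurableSet_Ioc hcongr]
  have hB := integrableOn_real_beta ha hd
  set B : ℝ := ∫ t in Set.Ioc (0:ℝ) 1, t ^ (a.re - 1) * (1 - t) ^ (d.re - 1) with hBdef
  have hsum : Summable (fun i => ∫ t in Set.Ioc (0:ℝ) 1, ‖F i t‖) := by
    apply Summable.of_nonneg_of_le (fun i => integral_nonneg (fun t => norm_nonneg _))
      (fun i => ?_) (hg.mul_right B)
    have : ∀ t : ℝ, ‖F i t‖ = ‖g i‖ * ‖(t:ℂ) ^ (a - 1 + e i) * (1 - (t:ℂ)) ^ (d - 1)‖ := by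
      intro t; rw [hF]; simp [norm_mul]
    simp_rw [this]
    rw [integral_const_mul]
    exact mul_le_mul_of_nonneg_left (integral_norm_le_realBeta ha hd (e i)) (norm_nonneg _)
  rw [← integral_tsum_of_summable_integral_norm hint hsum]
  refine tsum_congr fun i => ?_
  rw [hF]
  simp only
  rw [integral_const_mul]
  congr 1
  rw [Complex.betaIntegral, intervalIntegral.integral_of_le zero_le_one]
  refine setIntegral_congr_fun measurableSet_Ioc fun t _ => ?_
  congr 2
  ring

lemma kPoch_eq {k : ℝ} (hk : (k:ℂ) ≠ 0) (x : ℂ) (n : ℕ) :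
    kPoch k x n = (k:ℂ) ^ n * poch (x / (k:ℂ)) n := by
  induction n with
  | zero => simp [kPoch, poch]
  | succ n ih =>
    rw [kPoch, poch, Finset.prod_range_succ, Finset.prod_range_succ, ← kPoch, ← poch, ih]
    rw [pow_succ]
    field_simp

lemma kBetaF_eq (k : ℝ) (x y : ℂ) :
    kBetaF k x y = (1 / (k:ℂ)) * Complex.betaIntegral (x / (k:ℂ)) (y / (k:ℂ))  := by
  rw [kBetaF, Complex.betaIntegral]

lemma double_integral_eq {a d a' d' c u v : ℂ} (ha : 0 < a.re) (hd : 0 < d.re)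
    (ha' : 0 < a'.re) (hd' : 0 < d'.re) (huv : ‖u‖ + ‖v‖ < 1) :
    (∫ s in (0:ℝ)..1, ∫ t in (0:ℝ)..1,
        (t:ℂ) ^ (a - 1) * (s:ℂ) ^ (a' - 1) * ((1:ℂ) - (t:ℂ)) ^ (d - 1) *
          ((1:ℂ) - (s:ℂ)) ^ (d' - 1) * ((1:ℂ) - u * (t:ℂ) - v * (s:ℂ)) ^ (-c))
      = ∑' p : ℕ × ℕ, poch c (p.1 + p.2) * u ^ p.1 * v ^ p.2
          * Complex.betaIntegral (a + p.1) d * Complex.betaIntegral (a' + p.2) d'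
          / ((p.1.factorial : ℂ) * (p.2.factorial : ℂ)) := by
  have hu0 : (0:ℝ) ≤ ‖u‖ := norm_nonneg u
  have hv0 : (0:ℝ) ≤ ‖v‖ := norm_nonneg v
  set coef : ℕ × ℕ → ℂ := fun p =>
    poch c (p.1 + p.2) * u ^ p.1 * v ^ p.2 * Complex.betaIntegral (a + p.1) d
      / ((p.1.factorial : ℂ) * (p.2.factorial : ℂ)) with hcoef_def
  -- Step A : inner integral for s ∈ [0,1]
  have stepA : ∀ s ∈ Set.Icc (0:ℝ) 1,
      (∫ t in (0:ℝ)..1,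
        (t:ℂ) ^ (a - 1) * (s:ℂ) ^ (a' - 1) * ((1:ℂ) - (t:ℂ)) ^ (d - 1) *
          ((1:ℂ) - (s:ℂ)) ^ (d' - 1) * ((1:ℂ) - u * (t:ℂ) - v * (s:ℂ)) ^ (-c))
      = (s:ℂ) ^ (a' - 1) * ((1:ℂ) - (s:ℂ)) ^ (d' - 1) * ∑' p : ℕ × ℕ, coef p * (s:ℂ) ^ p.2 := by
    intro s hs
    obtain ⟨hs0, hs1⟩ := hs
    have hsn : ‖(s:ℂ)‖ ≤ 1 := by
      rw [Complex.norm_real, Real.norm_of_nonneg hs0]; exact hs1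
    have hvs : ‖v * (s:ℂ)‖ ≤ ‖v‖ := by
      rw [norm_mul]
      calc ‖v‖ * ‖(s:ℂ)‖ ≤ ‖v‖ * 1 := mul_le_mul_of_nonneg_left hsn hv0
      _ = ‖v‖ := mul_one _
    set g : ℕ × ℕ → ℂ := fun p =>
      poch c (p.1 + p.2) * u ^ p.1 * (v * (s:ℂ)) ^ p.2
        / ((p.1.factorial : ℂ) * (p.2.factorial : ℂ)) with hg_def
    have hg : Summable (fun p => ‖g p‖) := by
      apply Summable.congr (summable_poch_two c hu0 (norm_nonneg (v * (s:ℂ)))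
        (lt_of_le_of_lt (by linarith) huv))
      intro p
      rw [hg_def]
      simp [norm_mul, norm_div, norm_pow, Complex.norm_natCast]
    have e1 : ∀ t ∈ Set.uIcc (0:ℝ) 1,
        (t:ℂ) ^ (a - 1) * (s:ℂ) ^ (a' - 1) * ((1:ℂ) - (t:ℂ)) ^ (d - 1) *
          ((1:ℂ) - (s:ℂ)) ^ (d' - 1) * ((1:ℂ) - u * (t:ℂ) - v * (s:ℂ)) ^ (-c)
        = ((s:ℂ) ^ (a' - 1) * ((1:ℂ) - (s:ℂ)) ^ (d' - 1)) *
            ((t:ℂ) ^ (a - 1) * (1 - (t:ℂ)) ^ (d - 1) * ∑' p : ℕ × ℕ, g p * (t:ℂ) ^ p.1) := by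
      intro t ht
      rw [Set.uIcc_of_le zero_le_one] at ht
      obtain ⟨ht0, ht1⟩ := ht
      have htn : ‖(t:ℂ)‖ ≤ 1 := by
        rw [Complex.norm_real, Real.norm_of_nonneg ht0]; exact ht1
      have hut : ‖u * (t:ℂ)‖ + ‖v * (s:ℂ)‖ < 1 := by
        have h1 : ‖u * (t:ℂ)‖ ≤ ‖u‖ := by
          rw [norm_mul]
          calc ‖u‖ * ‖(t:ℂ)‖ ≤ ‖u‖ * 1 := mul_le_mul_of_nonneg_left htn hu0
          _ = ‖u‖ := mul_one _
        linarith
      have hsum := (hasSum_two_var hut c).tsum_eq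
      have e2 : ∑' p : ℕ × ℕ, g p * (t:ℂ) ^ p.1
          = ((1:ℂ) - u * (t:ℂ) - v * (s:ℂ)) ^ (-c) := by
        rw [← hsum]
        refine tsum_congr fun p => ?_
        rw [hg_def]
        simp only
        rw [mul_pow]
        ring
      rw [e2]
      ring
    rw [intervalIntegral.integral_congr e1, intervalIntegral.integral_const_mul,
      integral_tsum_beta ha hd g Prod.fst hg]
    congr 1
    refine tsum_congr fun p => ?_
    rw [hg_def, hcoef_def]
    simp only
    rw [mul_pow]
    ring
  -- Step B : outer integral
  have hcoef : Summable (fun p => ‖coef p‖) := by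
    set B : ℝ := ∫ t in Set.Ioc (0:ℝ) 1, t ^ (a.re - 1) * (1 - t) ^ (d.re - 1) with hB_def
    apply Summable.of_nonneg_of_le (fun p => norm_nonneg _) (fun p => ?_)
      ((summable_poch_two c hu0 hv0 huv).mul_right B)
    have hn : ‖coef p‖ = ‖poch c (p.1 + p.2)‖ * ‖u‖ ^ p.1 * ‖v‖ ^ p.2
        / ((p.1.factorial : ℝ) * (p.2.factorial : ℝ)) * ‖Complex.betaIntegral (a + p.1) d‖ := by
      rw [hcoef_def]
      simp [norm_mul, norm_div, norm_pow, Complex.norm_natCast]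
      ring
    rw [hn]
    exact mul_le_mul_of_nonneg_left (norm_betaIntegral_le ha hd p.1) (by positivity)
  have e3 : ∀ s ∈ Set.uIcc (0:ℝ) 1,
      (∫ t in (0:ℝ)..1,
        (t:ℂ) ^ (a - 1) * (s:ℂ) ^ (a' - 1) * ((1:ℂ) - (t:ℂ)) ^ (d - 1) *
          ((1:ℂ) - (s:ℂ)) ^ (d' - 1) * ((1:ℂ) - u * (t:ℂ) - v * (s:ℂ)) ^ (-c))
      = (s:ℂ) ^ (a' - 1) * (1 - (s:ℂ)) ^ (d' - 1) * ∑' p : ℕ × ℕ, coef p * (s:ℂ) ^ p.2 := by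
    intro s hs
    rw [Set.uIcc_of_le zero_le_one] at hs
    exact stepA s hs
  rw [intervalIntegral.integral_congr e3, integral_tsum_beta ha' hd' coef Prod.snd hcoef]
  refine tsum_congr fun p => ?_
  rw [hcoef_def]
  simp only
  ring

lemma term_eq {kC P A A' G G' BI BI' M N X Y : ℂ} (hk : kC ≠ 0) (hG : G ≠ 0) (hG' : G' ≠ 0)
    (hBI : BI ≠ 0) (hBI' : BI' ≠ 0) (hM : M ≠ 0) (hN : N ≠ 0) (m n : ℕ) :
    (kC^(m+n) * P) * (kC^m * A) * (kC^n * A') / ((kC^m * G) * (kC^n * G')) * X^m * Y^n / (M*N)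
    = 1/(kC^2 * (1/kC * BI) * (1/kC * BI')) *
        (P * (kC*X)^m * (kC*Y)^n * (A/G*BI) * (A'/G'*BI') / (M*N)) := by
  have h1 : kC^2 * (1/kC * BI) * (1/kC * BI') = BI * BI' := by
    field_simp
  rw [h1]
  have hkm : kC ^ m ≠ 0 := pow_ne_zero _ hk
  have hkn : kC ^ n ≠ 0 := pow_ne_zero _ hk
  field_simp
  rw [pow_add]
  ring


end AuxF2k

open Finset in
theorem F2k_integral_repr (k : ℝ) (hk : 0 < k) (α β β' γ γ' x y : ℂ)
    (hβ : 0 < β.re) (hγβ : β.re < γ.re) (hβ' : 0 < β'.re) (hγβ' : β'.re < γ'.re)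
    (hxy : ‖x‖ + ‖y‖ < 1 / k) :
    F2k k α β β' γ γ' x y =
      1 / ((k : ℂ) ^ 2 * kBetaF k β (γ - β) * kBetaF k β' (γ' - β')) *
        ∫ s in (0:ℝ)..1, ∫ t in (0:ℝ)..1,
          (t : ℂ) ^ (β / (k : ℂ) - 1) * (s : ℂ) ^ (β' / (k : ℂ) - 1) *
          ((1 : ℂ) - (t : ℂ)) ^ ((γ - β) / (k : ℂ) - 1) *
          ((1 : ℂ) - (s : ℂ)) ^ ((γ' - β') / (k : ℂ) - 1) *
          ((1 : ℂ) - (k : ℂ) * x * (t : ℂ) - (k : ℂ) * y * (s : ℂ)) ^ (-α / (k : ℂ)) := by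

  have hkC : (k:ℂ) ≠ 0 := by
    simp only [ne_eq, Complex.ofReal_eq_zero]
    exact ne_of_gt hk
  have ha : 0 < (β / (k:ℂ)).re := by
    rw [Complex.div_ofReal_re]; positivity
  have hd : 0 < ((γ - β) / (k:ℂ)).re := by
    rw [Complex.div_ofReal_re, Complex.sub_re]
    apply div_pos (by linarith) hk
  have ha' : 0 < (β' / (k:ℂ)).re := by
    rw [Complex.div_ofReal_re]; positivity
  have hd' : 0 < ((γ' - β') / (k:ℂ)).re := by
    rw [Complex.div_ofReal_re, Complex.sub_re]
    apply div_pos (by linarith) hk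
  have huv : ‖(k:ℂ) * x‖ + ‖(k:ℂ) * y‖ < 1 := by
    rw [norm_mul, norm_mul, Complex.norm_real, Real.norm_of_nonneg (le_of_lt hk)]
    have h1 : k * (‖x‖ + ‖y‖) < k * (1 / k) :=
      mul_lt_mul_of_pos_left hxy hk
    rw [mul_one_div, div_self (ne_of_gt hk)] at h1
    linarith [h1]
  rw [show -α / (k:ℂ) = -(α / (k:ℂ)) from neg_div _ _]
  rw [double_integral_eq ha hd ha' hd' huv]
  rw [kBetaF_eq, kBetaF_eq, F2k]
  rw [← tsum_mul_left]
  refine tsum_congr fun p => ?_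
  obtain ⟨m, n⟩ := p
  simp only
  have hgd : β / (k:ℂ) + (γ - β) / (k:ℂ) = γ / (k:ℂ) := by
    rw [← add_div]; ring_nf
  have hgd' : β' / (k:ℂ) + (γ' - β') / (k:ℂ) = γ' / (k:ℂ) := by
    rw [← add_div]; ring_nf
  rw [betaIntegral_shift ha hd m, betaIntegral_shift ha' hd' n, hgd, hgd']
  rw [kPoch_eq hkC α (m+n), kPoch_eq hkC β m, kPoch_eq hkC β' n,
    kPoch_eq hkC γ m, kPoch_eq hkC γ' n]
  have hβI := betaIntegral_ne_zero ha hd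
  have hβI' := betaIntegral_ne_zero ha' hd'
  have hpg : poch (γ / (k:ℂ)) m ≠ 0 := by
    apply poch_ne_zero
    rw [Complex.div_ofReal_re]
    apply div_pos (by linarith) hk
  have hpg' : poch (γ' / (k:ℂ)) n ≠ 0 := by
    apply poch_ne_zero
    rw [Complex.div_ofReal_re]
    apply div_pos (by linarith) hk
  have hm : ((m.factorial : ℂ)) ≠ 0 := Nat.cast_ne_zero.2 m.factorial_ne_zero
  have hn : ((n.factorial : ℂ)) ≠ 0 := Nat.cast_ne_zero.2 n.factorial_ne_zero
  exact term_eq hkC hpg hpg' hβI hβI' hm hn m n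
end

section
/- Let k > 0 and let α, β, β', γ, γ' be complex numbers with Re(γ) > Re(β) > 0 and Re(γ') > Re(β') > 0. If |x| + |y| < 1/k and |x/(1−ky)| + |y/(1−ky)| < 1/k, then F_{2,k}(α,β,β';γ,γ';x,y) = (1−ky)^{−α/k} F_{2,k}(α, β, γ'−β'; γ, γ'; x/(1−ky), −y/(1−ky)). -/
open MeasureTheory Complex

section KPochBasic

variable {k : ℝ} {x b : ℂ}

lemma kPoch_zero (k : ℝ) (x : ℂ) : kPoch k x 0 = 1 := by simp [kPoch]

lemma kPoch_succ (k : ℝ) (x : ℂ) (n : ℕ) :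
    kPoch k x (n + 1) = kPoch k x n * (x + (n : ℂ) * (k : ℂ)) := by
  simp [kPoch, Finset.prod_range_succ]

lemma kPoch_add (k : ℝ) (x : ℂ) (m n : ℕ) :
    kPoch k x (m + n) = kPoch k x m * kPoch k (x + (m : ℂ) * (k : ℂ)) n := by
  rw [kPoch, kPoch, kPoch, Finset.prod_range_add]
  congr 1
  refine Finset.prod_congr rfl fun i _ => ?_
  push_cast
  ring

lemma kPoch_ne_zero (hk : 0 ≤ k) (hx : 0 < x.re) (n : ℕ) : kPoch k x n ≠ 0 := by
  refine Finset.prod_ne_zero_iff.2 fun i _ => ?_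
  intro h
  have : (x + (i : ℂ) * (k : ℂ)).re = 0 := by rw [h]; simp
  simp only [Complex.add_re, Complex.mul_re, Complex.natCast_re, Complex.ofReal_re,
    Complex.natCast_im, Complex.ofReal_im] at this
  nlinarith [Nat.cast_nonneg (α := ℝ) i]

lemma kPoch_eq_pow_mul (hk : k ≠ 0) (x : ℂ) (n : ℕ) :
    kPoch k x n = (k : ℂ) ^ n * ∏ i ∈ Finset.range n, (x / (k : ℂ) + (i : ℂ)) := by
  have hk' : (k : ℂ) ≠ 0 := by exact_mod_cast hk
  induction n with
  | zero => simp [kPoch]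
  | succ n ih =>
    rw [kPoch_succ, ih, Finset.prod_range_succ, pow_succ]
    field_simp

lemma norm_kPoch_le (hk : 0 ≤ k) (b : ℂ) (n : ℕ) :
    ‖kPoch k b n‖ ≤ ∏ i ∈ Finset.range n, (‖b‖ + i * k) := by
  rw [kPoch, norm_prod]
  refine Finset.prod_le_prod (fun i _ => norm_nonneg _) fun i _ => ?_
  refine (norm_add_le _ _).trans ?_
  have : ‖(i : ℂ) * (k : ℂ)‖ = i * k := by
    rw [norm_mul, Complex.norm_natCast, Complex.norm_real, Real.norm_eq_abs, _root_.abs_of_nonneg hk]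
  rw [this]

lemma le_norm_kPoch (hk : 0 ≤ k) (hx : 0 < x.re) (n : ℕ) :
    ∏ i ∈ Finset.range n, (x.re + i * k) ≤ ‖kPoch k x n‖ := by
  rw [kPoch, norm_prod]
  refine Finset.prod_le_prod (fun i _ => by positivity) fun i _ => ?_
  have : (x + (i : ℂ) * (k : ℂ)).re = x.re + i * k := by
    simp [Complex.add_re, Complex.mul_re]
  calc x.re + i * k = (x + (i : ℂ) * (k : ℂ)).re := this.symm
    _ ≤ ‖x + (i : ℂ) * (k : ℂ)‖ := Complex.re_le_norm _

end KPochBasic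
section Bounds

lemma aux_prod_factorial (A : ℕ) : ∀ n : ℕ, (A + n).factorial = A.factorial * ∏ i ∈ Finset.range n, (A + 1 + i)
  | 0 => by simp
  | (n+1) => by
    rw [Finset.prod_range_succ, ← mul_assoc, ← aux_prod_factorial A n, ← Nat.add_assoc,
      Nat.factorial_succ, mul_comm]
    congr 1
    omega

lemma aux_choose_bound (A : ℕ) : ∀ n : ℕ, (A + n).factorial ≤ (n+1)^A * A.factorial * n.factorial := by
  induction A with
  | zero => intro n; simp
  | succ A ih =>
    intro n
    have h1 : (A + 1 + n) = (A + n) + 1 := by omega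
    rw [h1, Nat.factorial_succ]
    calc (A + n + 1) * (A + n).factorial ≤ ((A+1) * (n+1)) * ((n+1)^A * A.factorial * n.factorial) := by
          refine Nat.mul_le_mul (by nlinarith) (ih n)
      _ = (n+1)^(A+1) * ((A+1) * A.factorial) * n.factorial := by ring
      _ = (n+1)^(A+1) * (A+1).factorial * n.factorial := by rw [Nat.factorial_succ]

lemma aux_telescope (A : ℕ) : ∀ n : ℕ,
    ∏ i ∈ Finset.range n, (((i:ℝ)+2)/((i:ℝ)+1))^A = ((n:ℝ)+1)^A
  | 0 => by simp
  | (n+1) => by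
    have h1 : ((n:ℝ)+1) ≠ 0 := by positivity
    rw [Finset.prod_range_succ, aux_telescope A n, ← mul_pow]
    push_cast
    congr 1
    field_simp
    ring

/-- quantitative bound: `‖kPoch k b n‖ ≤ (n+1)^A * n! * k^n`. -/
lemma kPoch_norm_le_factorial {k : ℝ} (hk : 0 < k) (b : ℂ) :
    ∃ A : ℕ, ∀ n : ℕ, ‖kPoch k b n‖ ≤ ((n:ℝ)+1)^A * n.factorial * k^n := by
  refine ⟨⌈‖b‖ / k⌉₊, fun n => ?_⟩
  set A := ⌈‖b‖ / k⌉₊ with hA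
  have hbA : ‖b‖ ≤ A * k := by
    rw [← div_le_iff₀ hk]; exact Nat.le_ceil _
  have step1 : ‖kPoch k b n‖ ≤ ∏ i ∈ Finset.range n, (‖b‖ + i * k) := norm_kPoch_le hk.le b n
  have step2 : ∏ i ∈ Finset.range n, (‖b‖ + i * k) ≤ ∏ i ∈ Finset.range n, (k * ((A:ℝ) + 1 + i)) := by
    refine Finset.prod_le_prod (fun i _ => by positivity) fun i _ => ?_
    have : (0:ℝ) ≤ i * k := by positivity
    nlinarith
  have step3 : ∏ i ∈ Finset.range n, (k * ((A:ℝ) + 1 + i)) = k^n * (((A+n).factorial : ℝ) / (A.factorial : ℝ)) := by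
    rw [Finset.prod_mul_distrib, Finset.prod_const, Finset.card_range]
    congr 1
    have := aux_prod_factorial A n
    have hAf : (A.factorial : ℝ) ≠ 0 := by positivity
    field_simp
    rw [this]
    push_cast
    ring
  have step4 : (((A+n).factorial : ℝ) / (A.factorial : ℝ)) ≤ ((n:ℝ)+1)^A * n.factorial := by
    rw [div_le_iff₀ (by positivity)]
    have := aux_choose_bound A n
    calc (((A+n).factorial : ℝ)) ≤ ((n+1)^A * A.factorial * n.factorial : ℕ) := by exact_mod_cast this
      _ = ((n:ℝ)+1)^A * n.factorial * A.factorial := by push_cast; ring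
  calc ‖kPoch k b n‖ ≤ k^n * (((A+n).factorial : ℝ) / (A.factorial : ℝ)) := by
        rw [← step3]; exact step1.trans step2
    _ ≤ k^n * (((n:ℝ)+1)^A * n.factorial) := by
        refine mul_le_mul_of_nonneg_left step4 (by positivity)
    _ = ((n:ℝ)+1)^A * n.factorial * k^n := by ring

/-- quantitative bound: `‖kPoch k b n‖ ≤ (n+1)^A * ‖kPoch k x n‖` when `Re x > 0`. -/
lemma kPoch_norm_le_kPoch {k : ℝ} (hk : 0 < k) (b x : ℂ) (hx : 0 < x.re) :
    ∃ A : ℕ, ∀ n : ℕ, ‖kPoch k b n‖ ≤ ((n:ℝ)+1)^A * ‖kPoch k x n‖ := by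
  set m := min x.re k with hm
  have hm0 : 0 < m := lt_min hx hk
  refine ⟨⌈‖b‖ / m⌉₊, fun n => ?_⟩
  set A := ⌈‖b‖ / m⌉₊ with hA
  have hbA : ‖b‖ ≤ A * m := by
    rw [← div_le_iff₀ hm0]; exact Nat.le_ceil _
  have key : ∀ i : ℕ, ‖b‖ + i * k ≤ (((i:ℝ)+2)/((i:ℝ)+1))^A * (x.re + i * k) := by
    intro i
    have hi1 : (0:ℝ) < (i:ℝ) + 1 := by positivity
    have bern : 1 + (A:ℝ) * (1/((i:ℝ)+1)) ≤ (1 + 1/((i:ℝ)+1))^A := by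
      refine one_add_mul_le_pow (by nlinarith [one_div_pos.2 hi1]) A
    have heq : (1 + 1/((i:ℝ)+1)) = (((i:ℝ)+2)/((i:ℝ)+1)) := by field_simp; ring
    rw [heq] at bern
    have hxik : m * ((i:ℝ)+1) ≤ x.re + i * k := by
      have h1 : m ≤ x.re := min_le_left _ _
      have h2 : m * i ≤ k * i := by
        refine mul_le_mul_of_nonneg_right (min_le_right _ _) (by positivity)
      nlinarith
    calc ‖b‖ + i * k ≤ (x.re + i * k) + (A:ℝ) * m := by nlinarith
      _ ≤ (x.re + i * k) * (1 + (A:ℝ) * (1/((i:ℝ)+1))) := by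
          have : (A:ℝ) * m ≤ (x.re + i*k) * ((A:ℝ) * (1/((i:ℝ)+1))) := by
            rw [show (x.re + i*k) * ((A:ℝ) * (1/((i:ℝ)+1))) = (A:ℝ) * ((x.re + i*k) * (1/((i:ℝ)+1))) by ring]
            refine mul_le_mul_of_nonneg_left ?_ (by positivity)
            rw [mul_one_div, le_div_iff₀ hi1]
            nlinarith
          nlinarith [hxik, hm0.le]
      _ ≤ (((i:ℝ)+2)/((i:ℝ)+1))^A * (x.re + i * k) := by
          refine le_trans (mul_le_mul_of_nonneg_left bern (by nlinarith)) ?_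
          rw [mul_comm]
  calc ‖kPoch k b n‖ ≤ ∏ i ∈ Finset.range n, (‖b‖ + i * k) := norm_kPoch_le hk.le b n
    _ ≤ ∏ i ∈ Finset.range n, ((((i:ℝ)+2)/((i:ℝ)+1))^A * (x.re + i * k)) := by
        refine Finset.prod_le_prod (fun i _ => by positivity) fun i _ => key i
    _ = ((n:ℝ)+1)^A * ∏ i ∈ Finset.range n, (x.re + i * k) := by
        rw [Finset.prod_mul_distrib, aux_telescope]
    _ ≤ ((n:ℝ)+1)^A * ‖kPoch k x n‖ := by
        refine mul_le_mul_of_nonneg_left (le_norm_kPoch hk.le hx n) (by positivity)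

lemma aux_summable_poly_geo (A : ℕ) {r : ℝ} (hr0 : 0 ≤ r) (hr : r < 1) :
    Summable (fun n : ℕ => ((n:ℝ)+1)^A * r^n) := by
  have hfun : ∀ n : ℕ, ((n:ℝ)+1)^A * r^n
      = ∑ i ∈ Finset.range (A+1), (A.choose i : ℝ) * ((n:ℝ)^i * r^n) := by
    intro n
    rw [add_pow, Finset.sum_mul]
    refine Finset.sum_congr rfl fun i _ => by ring
  rw [funext hfun]
  refine summable_sum fun i _ => ?_
  refine Summable.mul_left _ ?_
  exact summable_pow_mul_geometric_of_norm_lt_one i (by rwa [Real.norm_eq_abs, _root_.abs_of_nonneg hr0])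

end Bounds
section Binomial

lemma aux_summable_of_norm_bound {f : ℕ → ℂ} (C : ℝ) (A : ℕ) {r : ℝ} (hr0 : 0 ≤ r) (hr : r < 1)
    (h : ∀ n, ‖f n‖ ≤ C * ((n:ℝ)+1)^A * r^n) : Summable f := by
  refine Summable.of_norm (Summable.of_nonneg_of_le (fun n => norm_nonneg _) (fun n => ?_)
    (((aux_summable_poly_geo A hr0 hr)).mul_left C))
  simpa [mul_assoc] using h n

/-- The binomial series `(1-w)^(-s) = ∑ (s)_n w^n / n!` for `‖w‖ < 1`. -/
lemma hasSum_binomial (s : ℂ) {w : ℂ} (hw : ‖w‖ < 1) :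
    HasSum (fun n : ℕ => (∏ i ∈ Finset.range n, (s + (i:ℂ))) * w ^ n / (n.factorial : ℂ))
      ((1 - w) ^ (-s)) := by
  have hpoch : ∀ n : ℕ, kPoch 1 s n = ∏ i ∈ Finset.range n, (s + (i:ℂ)) := by
    intro n; rw [kPoch]; refine Finset.prod_congr rfl fun i _ => by norm_num
  obtain ⟨A, hA⟩ := kPoch_norm_le_factorial one_pos s
  simp only [one_pow, mul_one] at hA
  set F : ℕ → ℂ → ℂ := fun n z => kPoch 1 s n / (n.factorial : ℂ) * z ^ n with hF
  set F' : ℕ → ℂ → ℂ := fun n z => kPoch 1 s n / (n.factorial : ℂ) * ((n : ℂ) * z ^ (n-1)) with hF'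
  have hnormF : ∀ (z : ℂ) (n : ℕ), ‖F n z‖ ≤ ((n:ℝ)+1)^A * ‖z‖^n := by
    intro z n
    rw [hF]
    simp only []
    rw [norm_mul, norm_div, norm_pow, Complex.norm_natCast]
    have h1 : ‖kPoch 1 s n‖ / (n.factorial:ℝ) ≤ ((n:ℝ)+1)^A := by
      rw [div_le_iff₀ (by positivity)]
      exact hA n
    exact mul_le_mul_of_nonneg_right h1 (by positivity)
  have hFsum : ∀ z : ℂ, ‖z‖ < 1 → Summable (fun n => F n z) := by
    intro z hz
    refine aux_summable_of_norm_bound 1 A (norm_nonneg z) hz fun n => ?_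
    refine (hnormF z n).trans (le_of_eq (by ring))
  set r : ℝ := (1 + ‖w‖)/2 with hr
  have hr0 : 0 < r := by positivity
  have hwr : ‖w‖ < r := by rw [hr]; linarith
  have hr1 : r < 1 := by rw [hr]; linarith
  set t : Set ℂ := Metric.ball (0:ℂ) r with ht
  have hmem : ∀ z : ℂ, z ∈ t → ‖z‖ < r := by
    intro z hz; simpa [ht, Metric.mem_ball, dist_zero_right] using hz
  have hwt : w ∈ t := by simpa [ht, Metric.mem_ball, dist_zero_right] using hwr
  have h0t : (0:ℂ) ∈ t := by simp [ht, Metric.mem_ball, hr0]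
  set u : ℕ → ℝ := fun n => ((n:ℝ)+1)^(A+1) * (r^n / r) with hu
  have husum : Summable u := by
    rw [hu]
    refine ((aux_summable_poly_geo (A+1) hr0.le hr1).div_const r).congr (fun n => ?_)
    rw [mul_div_assoc]
  have hder : ∀ (n : ℕ) (z : ℂ), z ∈ t → HasDerivAt (F n) (F' n z) z := by
    intro n z _
    simpa [hF, hF'] using (hasDerivAt_pow n z).const_mul (kPoch 1 s n / (n.factorial : ℂ))
  have hbound : ∀ (n : ℕ) (z : ℂ), z ∈ t → ‖F' n z‖ ≤ u n := by
    intro n z hz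
    rw [hF', hu]
    simp only []
    rw [norm_mul, norm_div, norm_mul, norm_pow, Complex.norm_natCast, Complex.norm_natCast]
    have h2 : ‖kPoch 1 s n‖ / (n.factorial:ℝ) ≤ ((n:ℝ)+1)^A := by
      rw [div_le_iff₀ (by positivity)]; exact hA n
    have h3 : ‖z‖^(n-1) ≤ r^n / r := by
      rcases Nat.eq_zero_or_pos n with h | h
      · subst h
        simp only [pow_zero, Nat.zero_sub, pow_zero]
        rw [le_div_iff₀ hr0]; simpa using hr1.le
      · have he : r ^ (n-1) = r^n / r := by
          rw [eq_div_iff hr0.ne', ← pow_succ]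
          congr 1
          omega
        rw [← he]
        exact pow_le_pow_left₀ (norm_nonneg z) (hmem z hz).le _
    calc ‖kPoch 1 s n‖ / (n.factorial:ℝ) * ((n:ℝ) * ‖z‖^(n-1))
        ≤ ((n:ℝ)+1)^A * (((n:ℝ)+1) * (r^n/r)) := by
          refine mul_le_mul h2 ?_ (by positivity) (by positivity)
          refine mul_le_mul (by linarith) h3 (by positivity) (by linarith [Nat.cast_nonneg (α := ℝ) n])
      _ = ((n:ℝ)+1)^(A+1) * (r^n / r) := by rw [pow_succ]; ring
  have hF0 : Summable fun n => F n 0 := hFsum 0 (by norm_num)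
  set g : ℂ → ℂ := fun z => ∑' n, F n z with hgdef
  have hg : ∀ z ∈ t, HasDerivAt g (∑' n, F' n z) z := by
    intro z hz
    exact hasDerivAt_tsum_of_isPreconnected husum Metric.isOpen_ball
      (convex_ball _ _).isPreconnected hder hbound h0t hF0 hz
  -- the functional identity (1-z) * D = s * g z for z in the ball
  have hkey : ∀ z ∈ t, (1 - z) * (∑' n, F' n z) = s * g z := by
    intro z hz
    have hz1 : ‖z‖ < 1 := (hmem z hz).trans hr1
    have hsumF : Summable (fun n => F n z) := hFsum z hz1
    have hsume : Summable (fun n : ℕ => (s + (n:ℂ)) * F n z) := by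
      refine aux_summable_of_norm_bound (‖s‖+1) (A+1) (norm_nonneg z) hz1 fun n => ?_
      rw [norm_mul]
      calc ‖s + (n:ℂ)‖ * ‖F n z‖ ≤ ((‖s‖+1) * ((n:ℝ)+1)) * (((n:ℝ)+1)^A * ‖z‖^n) := by
            refine mul_le_mul ?_ (hnormF z n) (norm_nonneg _) (by positivity)
            refine (norm_add_le _ _).trans ?_
            rw [Complex.norm_natCast]
            nlinarith [norm_nonneg s, Nat.cast_nonneg (α := ℝ) n]
        _ = (‖s‖+1) * ((n:ℝ)+1)^(A+1) * ‖z‖^n := by rw [pow_succ]; ring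
    have hsumq : Summable (fun n : ℕ => (n:ℂ) * F n z) := by
      refine aux_summable_of_norm_bound 1 (A+1) (norm_nonneg z) hz1 fun n => ?_
      rw [norm_mul, Complex.norm_natCast]
      calc (n:ℝ) * ‖F n z‖ ≤ ((n:ℝ)+1) * (((n:ℝ)+1)^A * ‖z‖^n) := by
            refine mul_le_mul (by linarith) (hnormF z n) (norm_nonneg _)
              (by linarith [Nat.cast_nonneg (α := ℝ) n])
        _ = 1 * ((n:ℝ)+1)^(A+1) * ‖z‖^n := by rw [pow_succ]; ring
    have hsumF' : Summable (fun n => F' n z) := by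
      refine Summable.of_norm (Summable.of_nonneg_of_le (fun n => norm_nonneg _)
        (fun n => hbound n z hz) husum)
    have hshift : ∀ n : ℕ, F' (n+1) z = (s + (n:ℂ)) * F n z := by
      intro n
      rw [hF', hF]
      simp only []
      have h1 : kPoch 1 s (n+1) = kPoch 1 s n * (s + (n:ℂ)) := by
        rw [kPoch_succ]; norm_num
      rw [h1]
      have h2 : ((n+1).factorial : ℂ) = ((n:ℂ)+1) * (n.factorial : ℂ) := by
        rw [Nat.factorial_succ]; push_cast; ring
      rw [h2]
      have h3 : ((n:ℂ)+1) ≠ 0 := by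
        exact_mod_cast Nat.cast_add_one_ne_zero (R := ℂ) n
      have h4 : (n.factorial : ℂ) ≠ 0 := by exact_mod_cast n.factorial_ne_zero
      have h5 : (n + 1 - 1) = n := by omega
      rw [h5]
      push_cast
      field_simp
    have hd : ∑' n, F' n z = ∑' (n : ℕ), (s + (n:ℂ)) * F n z := by
      rw [Summable.tsum_eq_zero_add hsumF']
      have h0 : F' 0 z = 0 := by rw [hF']; simp
      rw [h0, zero_add]
      exact tsum_congr hshift
    have hqshift : ∀ n : ℕ, ((n:ℂ)+1) * F (n+1) z = ((s + (n:ℂ)) * F n z) * z := by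
      intro n
      rw [hF]
      simp only []
      have h1 : kPoch 1 s (n+1) = kPoch 1 s n * (s + (n:ℂ)) := by
        rw [kPoch_succ]; norm_num
      rw [h1]
      have h2 : ((n+1).factorial : ℂ) = ((n:ℂ)+1) * (n.factorial : ℂ) := by
        rw [Nat.factorial_succ]; push_cast; ring
      rw [h2]
      have h3 : ((n:ℂ)+1) ≠ 0 := by
        exact_mod_cast Nat.cast_add_one_ne_zero (R := ℂ) n
      have h4 : (n.factorial : ℂ) ≠ 0 := by exact_mod_cast n.factorial_ne_zero
      rw [pow_succ]
      field_simp
    have hq : ∑' (n : ℕ), (n:ℂ) * F n z = (∑' (n : ℕ), (s + (n:ℂ)) * F n z) * z := by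
      rw [Summable.tsum_eq_zero_add hsumq]
      simp only [Nat.cast_zero, zero_mul, zero_add]
      rw [← tsum_mul_right]
      refine tsum_congr fun n => ?_
      rw [← hqshift n]
      push_cast
      ring
    rw [hd, sub_mul, one_mul, mul_comm z _, ← hq]
    show _ = s * ∑' (n : ℕ), F n z
    rw [← tsum_mul_left, ← Summable.tsum_sub hsume hsumq]
    refine tsum_congr fun n => ?_
    ring
  -- derivative of (1-z)^s * g z is zero on the ball
  have hODE : ∀ z ∈ t, HasDerivAt (fun z => (1-z)^s * g z) 0 z := by
    intro z hz
    have hz1 : ‖z‖ < 1 := (hmem z hz).trans hr1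
    have hre : 0 < (1 - z).re := by
      have : z.re ≤ ‖z‖ := Complex.re_le_norm z
      simp only [Complex.sub_re, Complex.one_re]
      linarith
    have hne : (1 - z) ≠ 0 := by
      intro h
      rw [h] at hre
      simp at hre
    have hd1 : HasDerivAt (fun z : ℂ => (1-z)^s) (s * (1-z)^(s-1) * (-1)) z := by
      exact HasDerivAt.cpow_const ((hasDerivAt_id z).const_sub 1) (Or.inl hre)
    have hd := hd1.mul (hg z hz)
    have hval : s * (1-z)^(s-1) * (-1) * g z + (1-z)^s * (∑' n, F' n z) = 0 := by
      have hpow : (1-z)^s = (1-z)^(s-1) * (1-z) := by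
        have : (1-z)^s = (1-z)^((s-1)+1) := by ring_nf
        rw [this, Complex.cpow_add _ _ hne, Complex.cpow_one]
      rw [hpow]
      have hzD := hkey z hz
      calc s * (1-z)^(s-1) * (-1) * g z + (1-z)^(s-1) * (1-z) * (∑' n, F' n z)
          = (1-z)^(s-1) * ((1 - z) * (∑' n, F' n z)) - (1-z)^(s-1) * (s * g z) := by ring
        _ = 0 := by rw [hzD]; ring
    rw [← hval]
    exact hd
  -- constancy
  have hconst : (1-w)^s * g w = 1 := by
    have hmv := Convex.norm_image_sub_le_of_norm_hasDerivWithin_le (s := t)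
      (f := fun z : ℂ => (1-z)^s * g z) (f' := fun _ : ℂ => (0:ℂ)) (C := 0)
      (fun x hx => (hODE x hx).hasDerivWithinAt) (fun x hx => by simp) (convex_ball _ _) h0t hwt
    simp only [zero_mul] at hmv
    have heq : (1-w)^s * g w = (1-(0:ℂ))^s * g 0 := by
      have := le_antisymm hmv (norm_nonneg _)
      rwa [norm_eq_zero, sub_eq_zero] at this
    rw [heq]
    have hg0 : g 0 = 1 := by
      show (∑' (n : ℕ), F n 0) = 1
      rw [tsum_eq_single 0 (fun n hn => ?_)]
      · rw [hF]; simp [kPoch_zero]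
      · rw [hF]; simp only []
        rw [zero_pow hn, mul_zero]
    rw [hg0, sub_zero, Complex.one_cpow, mul_one]
  -- conclusion
  have hne : (1 - w) ≠ 0 := by
    intro h
    have : (1:ℂ) = w := by rwa [sub_eq_zero] at h
    rw [← this] at hw
    simp at hw
  have hgw : (∑' (n : ℕ), F n w) = (1-w)^(-s) := by
    rw [Complex.cpow_neg]
    exact eq_inv_of_mul_eq_one_right hconst
  have hsum : HasSum (fun n : ℕ => F n w) ((1-w)^(-s)) := by
    have := (hFsum w hw).hasSum
    rwa [hgw] at this
  have hfe : (fun n : ℕ => (∏ i ∈ Finset.range n, (s + (i:ℂ))) * w ^ n / (n.factorial : ℂ))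
      = fun n : ℕ => F n w := by
    funext n
    rw [hF, ← hpoch n]
    simp only []
    ring
  rw [hfe]
  exact hsum

end Binomial
section DoubleSum

lemma aux_summable_choose {a b : ℝ} (ha : 0 ≤ a) (hb : 0 ≤ b) (hab : a + b < 1) (A : ℕ) :
    Summable (fun p : ℕ × ℕ => (((p.1+p.2 : ℕ):ℝ)+1)^A * ((p.1+p.2).choose p.1) * a^p.1 * b^p.2) := by
  set f : ℕ × ℕ → ℝ := fun p => (((p.1+p.2 : ℕ):ℝ)+1)^A * ((p.1+p.2).choose p.1) * a^p.1 * b^p.2 with hf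
  have hf0 : ∀ p : ℕ × ℕ, 0 ≤ f p := by
    intro p; rw [hf]; positivity
  rw [← Finset.HasAntidiagonal.sigmaAntidiagonalEquivProd.summable_iff]
  refine (summable_sigma_of_nonneg fun x => hf0 _).2 ⟨fun N => ?_, ?_⟩
  · exact Summable.of_finite
  · have hsum : ∀ N : ℕ, ∑' (p : (Finset.HasAntidiagonal.antidiagonal N : Finset (ℕ × ℕ))),
        f (Finset.HasAntidiagonal.sigmaAntidiagonalEquivProd ⟨N, p⟩) = ((N:ℝ)+1)^A * (a+b)^N := by
      intro N
      have h1 : ∑' (p : (Finset.HasAntidiagonal.antidiagonal N : Finset (ℕ × ℕ))),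
          f (Finset.HasAntidiagonal.sigmaAntidiagonalEquivProd ⟨N, p⟩)
          = ∑ p ∈ Finset.HasAntidiagonal.antidiagonal N, f p := by
        rw [← Finset.tsum_subtype]
        rfl
      rw [h1, Finset.Nat.sum_antidiagonal_eq_sum_range_succ_mk]
      rw [add_pow a b N, Finset.mul_sum]
      refine Finset.sum_congr rfl fun i hi => ?_
      have hiN : i ≤ N := Nat.lt_succ_iff.1 (Finset.mem_range.1 hi)
      have h2 : i + (N - i) = N := by omega
      rw [hf]
      simp only [h2]
      ring
    refine Summable.congr ?_ (fun N => (hsum N).symm)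
    refine aux_summable_poly_geo A (by positivity) hab |>.congr fun N => rfl
end DoubleSum
section F2kSummable

/-- Norm-summability of the F2k double series when `k(|x|+|y|) < 1`. -/
lemma F2k_summable {k : ℝ} (hk : 0 < k) (a b b' c c' x y : ℂ)
    (hc : 0 < c.re) (hc' : 0 < c'.re)
    (hxy : ‖x‖ + ‖y‖ < 1/k) :
    Summable (fun p : ℕ × ℕ => kPoch k a (p.1 + p.2) * kPoch k b p.1 * kPoch k b' p.2
      / (kPoch k c p.1 * kPoch k c' p.2)
      * x ^ p.1 * y ^ p.2 / ((p.1.factorial : ℂ) * (p.2.factorial : ℂ))) := by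
  obtain ⟨A₁, hA₁⟩ := kPoch_norm_le_factorial hk a
  obtain ⟨A₂, hA₂⟩ := kPoch_norm_le_kPoch hk b c hc
  obtain ⟨A₃, hA₃⟩ := kPoch_norm_le_kPoch hk b' c' hc'
  set a0 : ℝ := k * ‖x‖ with ha0
  set b0 : ℝ := k * ‖y‖ with hb0
  have ha0' : 0 ≤ a0 := by positivity
  have hb0' : 0 ≤ b0 := by positivity
  have hab : a0 + b0 < 1 := by
    have : (‖x‖ + ‖y‖) * k < 1/k * k :=
      mul_lt_mul_of_pos_right hxy hk
    rw [one_div, inv_mul_cancel₀ hk.ne'] at this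
    rw [ha0, hb0]; nlinarith
  refine Summable.of_norm (Summable.of_nonneg_of_le (fun p => norm_nonneg _) (fun p => ?_)
    (aux_summable_choose ha0' hb0' hab (A₁ + A₂ + A₃)))
  obtain ⟨m, n⟩ := p
  simp only []
  have hc0 : 0 < ‖kPoch k c m‖ := by
    rw [norm_pos_iff]; exact kPoch_ne_zero hk.le hc m
  have hc'0 : 0 < ‖kPoch k c' n‖ := by
    rw [norm_pos_iff]; exact kPoch_ne_zero hk.le hc' n
  have hnorm : ‖kPoch k a (m + n) * kPoch k b m * kPoch k b' n
      / (kPoch k c m * kPoch k c' n) * x ^ m * y ^ n / ((m.factorial : ℂ) * (n.factorial : ℂ))‖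
      = ‖kPoch k a (m+n)‖ * ‖kPoch k b m‖ * ‖kPoch k b' n‖ / (‖kPoch k c m‖ * ‖kPoch k c' n‖)
        * (‖x‖)^m * (‖y‖)^n / ((m.factorial : ℝ) * (n.factorial : ℝ)) := by
    simp only [norm_div, norm_mul, norm_pow, Complex.norm_natCast]
  rw [hnorm]
  have hfact : (0:ℝ) < (m.factorial : ℝ) * (n.factorial : ℝ) := by positivity
  have step1 : ‖kPoch k a (m+n)‖ * ‖kPoch k b m‖ * ‖kPoch k b' n‖
      ≤ (((m+n:ℕ):ℝ)+1)^A₁ * ((m+n).factorial : ℝ) * k^(m+n)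
        * (((m:ℕ):ℝ)+1)^A₂ * ‖kPoch k c m‖ * ((((n:ℕ):ℝ)+1)^A₃ * ‖kPoch k c' n‖) := by
    have := mul_le_mul (mul_le_mul (hA₁ (m+n)) (hA₂ m) (norm_nonneg _) (by positivity))
      (hA₃ n) (norm_nonneg _) (by positivity)
    calc ‖kPoch k a (m+n)‖ * ‖kPoch k b m‖ * ‖kPoch k b' n‖
        ≤ ((((m+n:ℕ):ℝ)+1)^A₁ * ((m+n).factorial : ℝ) * k^(m+n) * ((((m:ℕ):ℝ)+1)^A₂ * ‖kPoch k c m‖))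
          * ((((n:ℕ):ℝ)+1)^A₃ * ‖kPoch k c' n‖) := this
      _ = _ := by ring
  have hmono1 : (((m:ℕ):ℝ)+1)^A₂ ≤ (((m+n:ℕ):ℝ)+1)^A₂ := by
    refine pow_le_pow_left₀ (by positivity) ?_ _
    push_cast; linarith [Nat.cast_nonneg (α := ℝ) n]
  have hmono2 : (((n:ℕ):ℝ)+1)^A₃ ≤ (((m+n:ℕ):ℝ)+1)^A₃ := by
    refine pow_le_pow_left₀ (by positivity) ?_ _
    push_cast; linarith [Nat.cast_nonneg (α := ℝ) m]
  have hchoose : ((m+n).factorial : ℝ) / ((m.factorial : ℝ) * (n.factorial : ℝ))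
      = ((m+n).choose m : ℝ) := by
    rw [div_eq_iff hfact.ne']
    have h := Nat.add_choose_mul_factorial_mul_factorial n m
    rw [Nat.add_comm n m] at h
    push_cast [← h]
    try ring
  have hkx : k^(m+n) * ((‖x‖)^m * (‖y‖)^n) = a0^m * b0^n := by
    rw [pow_add, ha0, hb0, mul_pow, mul_pow]; ring
  calc ‖kPoch k a (m+n)‖ * ‖kPoch k b m‖ * ‖kPoch k b' n‖ / (‖kPoch k c m‖ * ‖kPoch k c' n‖)
        * (‖x‖)^m * (‖y‖)^n / ((m.factorial : ℝ) * (n.factorial : ℝ))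
      ≤ ((((m+n:ℕ):ℝ)+1)^A₁ * ((m+n).factorial : ℝ) * k^(m+n)
          * (((m:ℕ):ℝ)+1)^A₂ * ‖kPoch k c m‖ * ((((n:ℕ):ℝ)+1)^A₃ * ‖kPoch k c' n‖))
          / (‖kPoch k c m‖ * ‖kPoch k c' n‖)
        * (‖x‖)^m * (‖y‖)^n / ((m.factorial : ℝ) * (n.factorial : ℝ)) := by
        gcongr
    _ = ((((m+n:ℕ):ℝ)+1)^A₁ * (((m:ℕ):ℝ)+1)^A₂ * (((n:ℕ):ℝ)+1)^A₃)
          * (((m+n).factorial : ℝ) / ((m.factorial : ℝ) * (n.factorial : ℝ)))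
          * (k^(m+n) * ((‖x‖)^m * (‖y‖)^n)) := by
        rw [div_mul_eq_mul_div, div_mul_eq_mul_div, div_div,
          div_eq_iff (mul_pos (mul_pos hc0 hc'0) hfact).ne']
        field_simp
    _ = ((((m+n:ℕ):ℝ)+1)^A₁ * (((m:ℕ):ℝ)+1)^A₂ * (((n:ℕ):ℝ)+1)^A₃)
          * ((m+n).choose m : ℝ) * (a0^m * b0^n) := by rw [hchoose, hkx]
    _ ≤ ((((m+n:ℕ):ℝ)+1)^A₁ * (((m+n:ℕ):ℝ)+1)^A₂ * (((m+n:ℕ):ℝ)+1)^A₃)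
          * ((m+n).choose m : ℝ) * (a0^m * b0^n) := by
        gcongr
    _ = (((m+n:ℕ):ℝ)+1)^(A₁+A₂+A₃) * ((m+n).choose m : ℝ) * a0^m * b0^n := by
        rw [pow_add, pow_add]; ring

end F2kSummable
section Split

/-- Splitting the F2k double series into powers of `x` times hypergeometric functions of `y`. -/
lemma F2k_split {k : ℝ} (a b b' c c' x y : ℂ)
    (hsum : Summable (fun p : ℕ × ℕ => kPoch k a (p.1 + p.2) * kPoch k b p.1 * kPoch k b' p.2
      / (kPoch k c p.1 * kPoch k c' p.2)
      * x ^ p.1 * y ^ p.2 / ((p.1.factorial : ℂ) * (p.2.factorial : ℂ)))) :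
    F2k k a b b' c c' x y = ∑' m : ℕ, kPoch k a m * kPoch k b m / (kPoch k c m * (m.factorial : ℂ))
      * x ^ m * hyp2F1k k (a + (m:ℂ) * (k:ℂ)) b' c' y := by
  rw [F2k, Summable.tsum_prod' hsum (fun m => hsum.prod_factor m)]
  refine tsum_congr fun m => ?_
  rw [hyp2F1k, ← tsum_mul_left]
  refine tsum_congr fun n => ?_
  rw [kPoch_add k a m n]
  ring

end Split

section GammaBeta

lemma aux_re_add_nat {u : ℂ} (hu : 0 < u.re) (n : ℕ) : 0 < (u + (n:ℂ)).re := by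
  simp only [Complex.add_re, Complex.natCast_re]
  positivity

lemma aux_ne_zero_of_re_pos {u : ℂ} (hu : 0 < u.re) : u ≠ 0 := by
  intro h; rw [h] at hu; simp at hu

lemma aux_Gamma_shift {u : ℂ} (hu : 0 < u.re) (n : ℕ) :
    Complex.Gamma (u + (n:ℂ)) = (∏ i ∈ Finset.range n, (u + (i:ℂ))) * Complex.Gamma u := by
  induction n with
  | zero => simp
  | succ n ih =>
    have h1 : u + ((n+1 : ℕ):ℂ) = (u + (n:ℂ)) + 1 := by push_cast; ring
    rw [h1, Complex.Gamma_add_one _ (aux_ne_zero_of_re_pos (aux_re_add_nat hu n)), ih,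
      Finset.prod_range_succ]
    ring

lemma aux_Gamma_ne_zero {u : ℂ} (hu : 0 < u.re) : Complex.Gamma u ≠ 0 := by
  refine Complex.Gamma_ne_zero fun m => ?_
  intro h
  rw [h] at hu
  simp only [Complex.neg_re, Complex.natCast_re] at hu
  have : (0:ℝ) ≤ (m:ℝ) := Nat.cast_nonneg m
  linarith

lemma aux_beta_ratio {u v : ℂ} (hu : 0 < u.re) (hv : 0 < v.re) (n : ℕ) :
    Complex.betaIntegral (u + (n:ℂ)) v * (∏ i ∈ Finset.range n, (u + v + (i:ℂ)))
      = (∏ i ∈ Finset.range n, (u + (i:ℂ))) * Complex.betaIntegral u v := by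
  have huv : 0 < (u + v).re := by simp only [Complex.add_re]; positivity
  have h1 := Complex.Gamma_mul_Gamma_eq_betaIntegral (aux_re_add_nat hu n) hv
  have h2 := Complex.Gamma_mul_Gamma_eq_betaIntegral hu hv
  rw [aux_Gamma_shift hu n] at h1
  have h3 : u + (n:ℂ) + v = (u + v) + (n:ℂ) := by ring
  rw [h3, aux_Gamma_shift huv n] at h1
  -- h1 : Pn * Γ u * Γ v = Qn * Γ (u+v) * B(u+n, v)
  -- h2 : Γ u * Γ v = Γ (u+v) * B(u, v)
  have h4 : (∏ i ∈ Finset.range n, (u + (i:ℂ))) * (Complex.Gamma (u+v) * Complex.betaIntegral u v)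
      = (∏ i ∈ Finset.range n, (u + v + (i:ℂ))) * Complex.Gamma (u+v)
        * Complex.betaIntegral (u + (n:ℂ)) v := by
    rw [← h2, ← mul_assoc]
    exact h1
  have h5 := aux_Gamma_ne_zero huv
  rw [mul_comm (Complex.betaIntegral (u + (n:ℂ)) v) _]
  refine mul_left_cancel₀ h5 ?_
  calc Complex.Gamma (u+v) * ((∏ i ∈ Finset.range n, (u + v + (i:ℂ))) * Complex.betaIntegral (u + (n:ℂ)) v)
      = (∏ i ∈ Finset.range n, (u + v + (i:ℂ))) * Complex.Gamma (u+v) * Complex.betaIntegral (u + (n:ℂ)) v := by ring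
    _ = (∏ i ∈ Finset.range n, (u + (i:ℂ))) * (Complex.Gamma (u+v) * Complex.betaIntegral u v) := by
        rw [← h4]
    _ = Complex.Gamma (u+v) * ((∏ i ∈ Finset.range n, (u + (i:ℂ))) * Complex.betaIntegral u v) := by ring

lemma aux_betaIntegral_ne_zero {u v : ℂ} (hu : 0 < u.re) (hv : 0 < v.re) :
    Complex.betaIntegral u v ≠ 0 := by
  intro h
  have h2 := Complex.Gamma_mul_Gamma_eq_betaIntegral hu hv
  rw [h, mul_zero] at h2
  exact mul_ne_zero (aux_Gamma_ne_zero hu) (aux_Gamma_ne_zero hv) h2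

end GammaBeta

section MulCpow

lemma aux_mul_cpow {a b : ℂ} (ha : 0 < a.re) (hb : 0 < b.re) (c : ℂ) :
    (a * b) ^ c = a ^ c * b ^ c := by
  have ha0 : a ≠ 0 := aux_ne_zero_of_re_pos ha
  have hb0 : b ≠ 0 := aux_ne_zero_of_re_pos hb
  have hab : a * b ≠ 0 := mul_ne_zero ha0 hb0
  have harga : |Complex.arg a| < Real.pi / 2 :=
    Complex.abs_arg_lt_pi_div_two_iff.2 (Or.inl ha)
  have hargb : |Complex.arg b| < Real.pi / 2 :=
    Complex.abs_arg_lt_pi_div_two_iff.2 (Or.inl hb)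
  have harg : Complex.arg a + Complex.arg b ∈ Set.Ioc (-Real.pi) Real.pi := by
    constructor
    · rw [abs_lt] at harga hargb
      linarith [Real.pi_pos]
    · rw [abs_lt] at harga hargb
      linarith [Real.pi_pos]
  rw [Complex.cpow_def_of_ne_zero hab, Complex.cpow_def_of_ne_zero ha0,
    Complex.cpow_def_of_ne_zero hb0, Complex.log_mul ha0 hb0 harg, add_mul, Complex.exp_add]

end MulCpow
section Euler

lemma aux_div_re {k : ℝ} (hk : 0 < k) (z : ℂ) : (z / (k:ℂ)).re = z.re / k := by
  have : z / (k:ℂ) = ((k⁻¹ : ℝ):ℂ) * z := by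
    push_cast
    field_simp
  rw [this, Complex.re_ofReal_mul]
  field_simp

/-- Euler integral representation of the k-hypergeometric function. -/
lemma euler_rep {k : ℝ} (hk : 0 < k) (a b c : ℂ) (hb : 0 < b.re) (hcb : 0 < (c - b).re)
    {w : ℂ} (hw : ‖w‖ < 1/k) :
    (∫ t in (0:ℝ)..1, (t:ℂ) ^ (b/(k:ℂ) - 1) * ((1:ℂ) - (t:ℂ)) ^ ((c-b)/(k:ℂ) - 1)
        * ((1:ℂ) - (k:ℂ) * w * (t:ℂ)) ^ (-(a/(k:ℂ))))
      = Complex.betaIntegral (b/(k:ℂ)) ((c-b)/(k:ℂ)) * hyp2F1k k a b c w := by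
  have hkC : (k:ℂ) ≠ 0 := by exact_mod_cast hk.ne'
  have hkw : k * ‖w‖ < 1 := by
    have h := mul_lt_mul_of_pos_left hw hk
    rwa [mul_one_div, div_self hk.ne'] at h
  have hkw0 : 0 ≤ k * ‖w‖ := by positivity
  set U : ℂ := b/(k:ℂ) with hUdef
  set V : ℂ := (c-b)/(k:ℂ) with hVdef
  have hure : 0 < U.re := by rw [hUdef, aux_div_re hk]; positivity
  have hvre : 0 < V.re := by rw [hVdef, aux_div_re hk]; positivity
  have hUnre : ∀ n : ℕ, 0 < (U + (n:ℂ)).re := fun n => aux_re_add_nat hure n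
  have hcre : 0 < c.re := by
    have : c.re = b.re + (c - b).re := by simp [Complex.sub_re]
    rw [this]; positivity
  have hUV : U + V = c / (k:ℂ) := by rw [hUdef, hVdef, ← add_div]; ring_nf
  obtain ⟨A, hA⟩ := kPoch_norm_le_factorial hk a
  set G : ℕ → ℝ → ℂ := fun n t => (kPoch k a n * w ^ n / (n.factorial : ℂ))
      * ((t:ℂ) ^ (U + (n:ℂ) - 1) * ((1:ℂ) - (t:ℂ)) ^ (V - 1)) with hG
  -- integrability
  have hbase : ∀ n : ℕ, IntegrableOn (fun t : ℝ => (t:ℂ) ^ (U + (n:ℂ) - 1) * ((1:ℂ) - (t:ℂ)) ^ (V - 1))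
      (Set.Ioc (0:ℝ) 1) volume := by
    intro n
    have h := Complex.betaIntegral_convergent (hUnre n) hvre
    rwa [intervalIntegrable_iff, Set.uIoc_of_le zero_le_one] at h
  have hbase0 : IntegrableOn (fun t : ℝ => (t:ℂ) ^ (U - 1) * ((1:ℂ) - (t:ℂ)) ^ (V - 1))
      (Set.Ioc (0:ℝ) 1) volume := by
    have h := Complex.betaIntegral_convergent hure hvre
    rwa [intervalIntegrable_iff, Set.uIoc_of_le zero_le_one] at h
  have hGint : ∀ n : ℕ, IntegrableOn (G n) (Set.Ioc (0:ℝ) 1) volume := by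
    intro n
    exact (hbase n).const_mul _
  -- bound on integrals of norms
  set RB : ℝ := ∫ t in Set.Ioc (0:ℝ) 1, ‖(t:ℂ) ^ (U - 1) * ((1:ℂ) - (t:ℂ)) ^ (V - 1)‖ with hRB
  have hRB0 : 0 ≤ RB := by
    rw [hRB]; exact MeasureTheory.integral_nonneg fun t => norm_nonneg _
  have hptle : ∀ n : ℕ, ∀ t ∈ Set.Ioc (0:ℝ) 1,
      ‖(t:ℂ) ^ (U + (n:ℂ) - 1) * ((1:ℂ) - (t:ℂ)) ^ (V - 1)‖
        ≤ ‖(t:ℂ) ^ (U - 1) * ((1:ℂ) - (t:ℂ)) ^ (V - 1)‖ := by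
    intro n t ht
    rw [norm_mul, norm_mul]
    refine mul_le_mul_of_nonneg_right ?_ (norm_nonneg _)
    have h1 : ‖(t:ℂ) ^ (U + (n:ℂ) - 1)‖ = t ^ ((U + (n:ℂ) - 1).re) :=
      Complex.norm_cpow_eq_rpow_re_of_pos ht.1 _
    have h2 : ‖(t:ℂ) ^ (U - 1)‖ = t ^ ((U - 1).re) :=
      Complex.norm_cpow_eq_rpow_re_of_pos ht.1 _
    rw [h1, h2]
    refine Real.rpow_le_rpow_of_exponent_ge ht.1 ht.2 ?_
    simp only [Complex.sub_re, Complex.add_re, Complex.natCast_re, Complex.one_re]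
    linarith [Nat.cast_nonneg (α := ℝ) n]
  have hGnorm : ∀ n : ℕ, (∫ t in Set.Ioc (0:ℝ) 1, ‖G n t‖)
      ≤ (((n:ℝ)+1)^A * (k * ‖w‖)^n) * RB := by
    intro n
    have h1 : ∀ t : ℝ, ‖G n t‖ = ‖kPoch k a n * w ^ n / (n.factorial : ℂ)‖
        * ‖(t:ℂ) ^ (U + (n:ℂ) - 1) * ((1:ℂ) - (t:ℂ)) ^ (V - 1)‖ := by
      intro t; rw [hG]; simp only []; rw [norm_mul]
    calc (∫ t in Set.Ioc (0:ℝ) 1, ‖G n t‖)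
        = ‖kPoch k a n * w ^ n / (n.factorial : ℂ)‖
          * ∫ t in Set.Ioc (0:ℝ) 1, ‖(t:ℂ) ^ (U + (n:ℂ) - 1) * ((1:ℂ) - (t:ℂ)) ^ (V - 1)‖ := by
          rw [← MeasureTheory.integral_const_mul]
          exact MeasureTheory.integral_congr_ae (Filter.Eventually.of_forall fun t => h1 t)
      _ ≤ (((n:ℝ)+1)^A * (k * ‖w‖)^n)
          * ∫ t in Set.Ioc (0:ℝ) 1, ‖(t:ℂ) ^ (U - 1) * ((1:ℂ) - (t:ℂ)) ^ (V - 1)‖ := by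
          refine mul_le_mul ?_ ?_ (MeasureTheory.integral_nonneg fun t => norm_nonneg _) (by positivity)
          · rw [norm_div, norm_mul, norm_pow, Complex.norm_natCast]
            rw [div_le_iff₀ (by positivity : (0:ℝ) < (n.factorial : ℝ))]
            calc ‖kPoch k a n‖ * ‖w‖^n ≤ (((n:ℝ)+1)^A * n.factorial * k^n) * ‖w‖^n := by
                  refine mul_le_mul_of_nonneg_right (hA n) (by positivity)
              _ = ((n:ℝ)+1)^A * (k * ‖w‖)^n * n.factorial := by
                  rw [mul_pow]; ring
          · refine MeasureTheory.setIntegral_mono_on ((hbase n).norm) (hbase0.norm)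
              measurableSet_Ioc (fun t ht => hptle n t ht)
      _ = (((n:ℝ)+1)^A * (k * ‖w‖)^n) * RB := by rw [hRB]
  have hGsum : Summable (fun n : ℕ => ∫ t in Set.Ioc (0:ℝ) 1, ‖G n t‖) := by
    refine Summable.of_nonneg_of_le
      (fun n => MeasureTheory.integral_nonneg fun t => norm_nonneg _)
      (fun n => hGnorm n)
      (((aux_summable_poly_geo A hkw0 hkw)).mul_right RB)
  -- pointwise expansion
  have hpt : ∀ t ∈ Set.Ioc (0:ℝ) 1,
      (t:ℂ) ^ (U - 1) * ((1:ℂ) - (t:ℂ)) ^ (V - 1) * ((1:ℂ) - (k:ℂ) * w * (t:ℂ)) ^ (-(a/(k:ℂ)))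
        = ∑' n : ℕ, G n t := by
    intro t ht
    have htC : (t:ℂ) ≠ 0 := by
      exact_mod_cast ne_of_gt ht.1
    have hWt : ‖(k:ℂ) * w * (t:ℂ)‖ < 1 := by
      rw [norm_mul, norm_mul, Complex.norm_real, Real.norm_eq_abs, _root_.abs_of_nonneg hk.le,
        Complex.norm_real, Real.norm_eq_abs, _root_.abs_of_nonneg ht.1.le]
      calc k * ‖w‖ * t ≤ k * ‖w‖ * 1 := by
            refine mul_le_mul_of_nonneg_left ht.2 (by positivity)
        _ < 1 := by rw [mul_one]; exact hkw
    have hbin := hasSum_binomial (a/(k:ℂ)) hWt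
    rw [← hbin.tsum_eq, ← tsum_mul_left]
    refine tsum_congr fun n => ?_
    have hsplit : (t:ℂ) ^ (U + (n:ℂ) - 1) = (t:ℂ)^(U-1) * (t:ℂ)^n := by
      rw [show U + (n:ℂ) - 1 = (U - 1) + (n:ℂ) by ring, Complex.cpow_add _ _ htC,
        Complex.cpow_natCast]
    rw [hG]
    simp only []
    rw [hsplit, kPoch_eq_pow_mul hk.ne' a n]
    ring
  -- main computation
  rw [intervalIntegral.integral_of_le zero_le_one,
    MeasureTheory.setIntegral_congr_fun measurableSet_Ioc hpt,
    ← MeasureTheory.integral_tsum_of_summable_integral_norm hGint hGsum]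
  have hstep : ∀ n : ℕ, (∫ t in Set.Ioc (0:ℝ) 1, G n t)
      = Complex.betaIntegral U V
        * (kPoch k a n * kPoch k b n / kPoch k c n * w ^ n / (n.factorial : ℂ)) := by
    intro n
    have hInt : (∫ t in Set.Ioc (0:ℝ) 1, G n t)
        = (kPoch k a n * w ^ n / (n.factorial : ℂ)) * Complex.betaIntegral (U + (n:ℂ)) V := by
      rw [hG]
      simp only []
      rw [MeasureTheory.integral_const_mul]
      congr 1
      rw [Complex.betaIntegral, intervalIntegral.integral_of_le zero_le_one]
    have hPb : kPoch k b n = (k:ℂ)^n * ∏ i ∈ Finset.range n, (U + (i:ℂ)) := by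
      rw [hUdef]; exact kPoch_eq_pow_mul hk.ne' b n
    have hQc : kPoch k c n = (k:ℂ)^n * ∏ i ∈ Finset.range n, (U + V + (i:ℂ)) := by
      rw [hUV]; exact kPoch_eq_pow_mul hk.ne' c n
    have hQn0 : (∏ i ∈ Finset.range n, (U + V + (i:ℂ))) ≠ 0 := by
      intro h
      have := kPoch_ne_zero hk.le hcre n
      rw [hQc, h, mul_zero] at this
      exact this rfl
    have hBn : Complex.betaIntegral (U + (n:ℂ)) V
        = (∏ i ∈ Finset.range n, (U + (i:ℂ))) * Complex.betaIntegral U V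
          / (∏ i ∈ Finset.range n, (U + V + (i:ℂ))) := by
      rw [eq_div_iff hQn0]
      exact aux_beta_ratio hure hvre n
    rw [hInt, hBn, hPb, hQc]
    have hfac : (n.factorial : ℂ) ≠ 0 := by exact_mod_cast n.factorial_ne_zero
    have hkn : ((k:ℂ))^n ≠ 0 := pow_ne_zero n hkC
    field_simp
  rw [tsum_congr hstep, tsum_mul_left]
  rfl

end Euler
section Pfaff

/-- Pfaff transformation for the k-hypergeometric function. -/
lemma pfaff {k : ℝ} (hk : 0 < k) (a b c : ℂ) (hb : 0 < b.re) (hcb : b.re < c.re)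
    {y : ℂ} (hy : ‖y‖ < 1/k) (hv : ‖y / (1 - (k:ℂ) * y)‖ < 1/k) :
    hyp2F1k k a b c y
      = (1 - (k:ℂ) * y) ^ (-(a/(k:ℂ))) * hyp2F1k k a (c - b) c (-(y / (1 - (k:ℂ) * y))) := by
  have hkC : (k:ℂ) ≠ 0 := by exact_mod_cast hk.ne'
  have hcb' : 0 < (c - b).re := by simp only [Complex.sub_re]; linarith
  have hky : k * ‖y‖ < 1 := by
    have h := mul_lt_mul_of_pos_left hy hk
    rwa [mul_one_div, div_self hk.ne'] at h
  set z : ℂ := 1 - (k:ℂ) * y with hz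
  have hzre : 0 < z.re := by
    rw [hz]
    simp only [Complex.sub_re, Complex.one_re, Complex.mul_re, Complex.ofReal_re,
      Complex.ofReal_im, zero_mul, sub_zero]
    have h1 : y.re ≤ ‖y‖ := Complex.re_le_norm y
    nlinarith [norm_nonneg y]
  have hz0 : z ≠ 0 := aux_ne_zero_of_re_pos hzre
  set v : ℂ := y / z with hvdef
  have hkv : k * ‖v‖ < 1 := by
    have h := mul_lt_mul_of_pos_left hv hk
    rwa [mul_one_div, div_self hk.ne'] at h
  have hbc2 : 0 < (c - (c - b)).re := by
    have : c - (c - b) = b := by ring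
    rw [this]; exact hb
  have hvneg : ‖-v‖ < 1/k := by rwa [norm_neg]
  -- the two Euler representations
  have hE1 := euler_rep hk a b c hb hcb' hy
  have hE2 := euler_rep hk a (c - b) c hcb' hbc2 hvneg
  have hcc : c - (c - b) = b := by ring
  rw [hcc] at hE2
  -- substitution t ↦ 1 - t in the first integral
  have hsub := intervalIntegral.integral_comp_sub_left
    (f := fun t : ℝ => (t:ℂ) ^ (b/(k:ℂ) - 1) * ((1:ℂ) - (t:ℂ)) ^ ((c-b)/(k:ℂ) - 1)
      * ((1:ℂ) - (k:ℂ) * y * (t:ℂ)) ^ (-(a/(k:ℂ)))) (a := 0) (b := 1) 1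
  norm_num at hsub
  -- pointwise identity on [0,1]
  have hpt : ∀ t ∈ Set.uIcc (0:ℝ) 1,
      ((1:ℂ) - (t:ℂ)) ^ (b/(k:ℂ) - 1) * (t:ℂ) ^ ((c-b)/(k:ℂ) - 1)
        * ((1:ℂ) - (k:ℂ) * y * ((1:ℂ) - (t:ℂ))) ^ (-(a/(k:ℂ)))
      = z ^ (-(a/(k:ℂ))) * ((t:ℂ) ^ ((c-b)/(k:ℂ) - 1) * ((1:ℂ) - (t:ℂ)) ^ (b/(k:ℂ) - 1)
        * ((1:ℂ) - (k:ℂ) * (-v) * (t:ℂ)) ^ (-(a/(k:ℂ)))) := by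
    intro t ht
    rw [Set.uIcc_of_le zero_le_one] at ht
    have hprod : (1:ℂ) - (k:ℂ) * y * ((1:ℂ) - (t:ℂ)) = z * ((1:ℂ) - (k:ℂ) * (-v) * (t:ℂ)) := by
      rw [hvdef, hz]
      have hz0' := hz0
      rw [hz] at hz0'
      field_simp
      ring
    have hXre : 0 < ((1:ℂ) - (k:ℂ) * (-v) * (t:ℂ)).re := by
      have habs : ‖(k:ℂ) * (-v) * (t:ℂ)‖ = k * ‖v‖ * t := by
        rw [norm_mul, norm_mul, norm_neg, Complex.norm_real, Real.norm_eq_abs,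
          Complex.norm_real, Real.norm_eq_abs, _root_.abs_of_nonneg hk.le, _root_.abs_of_nonneg ht.1]
      have hre : ((k:ℂ) * (-v) * (t:ℂ)).re ≤ ‖(k:ℂ) * (-v) * (t:ℂ)‖ :=
        Complex.re_le_norm _
      simp only [Complex.sub_re, Complex.one_re]
      have : k * ‖v‖ * t ≤ k * ‖v‖ * 1 := by
        refine mul_le_mul_of_nonneg_left ht.2 (by positivity)
      rw [habs] at hre
      nlinarith
    rw [hprod, aux_mul_cpow hzre hXre]
    ring
  rw [intervalIntegral.integral_congr hpt] at hsub
  rw [intervalIntegral.integral_const_mul] at hsub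
  -- combine
  rw [hE1, hE2, Complex.betaIntegral_symm] at hsub
  -- hsub : z^(-a/k) * (B * H') = B * H
  have hB0 : Complex.betaIntegral (b/(k:ℂ)) ((c-b)/(k:ℂ)) ≠ 0 := by
    refine aux_betaIntegral_ne_zero ?_ ?_
    · rw [aux_div_re hk]; positivity
    · rw [aux_div_re hk]; positivity
  refine mul_left_cancel₀ hB0 ?_
  rw [← hsub]
  ring

end Pfaff
theorem F2k_transformation2 (k : ℝ) (hk : 0 < k) (α β β' γ γ' x y : ℂ)
    (hβ : 0 < β.re) (hγβ : β.re < γ.re) (hβ' : 0 < β'.re) (hγβ' : β'.re < γ'.re)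
    (hxy : ‖x‖ + ‖y‖ < 1 / k)
    (hxy' : ‖x / (1 - (k : ℂ) * y)‖ + ‖y / (1 - (k : ℂ) * y)‖ < 1 / k) :
    F2k k α β β' γ γ' x y =
      (1 - (k : ℂ) * y) ^ (-α / (k : ℂ)) *
        F2k k α β (γ' - β') γ γ' (x / (1 - (k : ℂ) * y)) (-(y / (1 - (k : ℂ) * y))) := by
  have hkC : (k:ℂ) ≠ 0 := by exact_mod_cast hk.ne'
  have hγ0 : 0 < γ.re := lt_trans hβ hγβ
  have hγ'0 : 0 < γ'.re := lt_trans hβ' hγβ'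
  have hy1 : ‖y‖ < 1/k :=
    lt_of_le_of_lt (le_add_of_nonneg_left (norm_nonneg x)) hxy
  have hv1 : ‖y / (1 - (k:ℂ) * y)‖ < 1/k :=
    lt_of_le_of_lt (le_add_of_nonneg_left (norm_nonneg _)) hxy'
  have hky : k * ‖y‖ < 1 := by
    have h := mul_lt_mul_of_pos_left hy1 hk
    rwa [mul_one_div, div_self hk.ne'] at h
  set z : ℂ := 1 - (k:ℂ) * y with hz
  have hzre : 0 < z.re := by
    rw [hz]
    simp only [Complex.sub_re, Complex.one_re, Complex.mul_re, Complex.ofReal_re,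
      Complex.ofReal_im, zero_mul, sub_zero]
    have h1 : y.re ≤ ‖y‖ := Complex.re_le_norm y
    nlinarith [norm_nonneg y]
  have hz0 : z ≠ 0 := aux_ne_zero_of_re_pos hzre
  -- summability of the two double series
  have hsum1 := F2k_summable hk α β β' γ γ' x y hγ0 hγ'0 hxy
  have hxy'' : ‖x / z‖ + ‖-(y / z)‖ < 1/k := by
    rwa [norm_neg]
  have hsum2 := F2k_summable hk α β (γ' - β') γ γ' (x / z) (-(y / z)) hγ0 hγ'0 hxy''
  rw [F2k_split α β β' γ γ' x y hsum1, F2k_split α β (γ' - β') γ γ' (x / z) (-(y / z)) hsum2,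
    ← tsum_mul_left]
  refine tsum_congr fun m => ?_
  have hpf := pfaff hk (α + (m:ℂ) * (k:ℂ)) β' γ' hβ' hγβ' hy1 hv1
  rw [hpf]
  have hzpow : z ^ (-((α + (m:ℂ) * (k:ℂ))/(k:ℂ))) = z ^ (-α / (k:ℂ)) * ((z:ℂ)^m)⁻¹ := by
    have h1 : -((α + (m:ℂ) * (k:ℂ))/(k:ℂ)) = -α/(k:ℂ) + (-(m:ℂ)) := by
      field_simp
      ring
    rw [h1, Complex.cpow_add _ _ hz0, Complex.cpow_neg, Complex.cpow_natCast]
  rw [hzpow, div_pow]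
  ring
end
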